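/- arXiv:2011.00453 — 3 statements merged into one kernel-verified Lean document; each statement's English description precedes it below -/
import Mathlib

section
/- For n ≥ 1 with Tribonacci representation e_1 e_2 ... e_r, the number of occurrences of the letter 0 in the prefix TR[0..n-1] of the Tribonacci word equals [e_1 ... e_{r-1}]_T + e_r, where [w]_T denotes the value of the binary word w interpreted in the Tribonacci numeration system. -/
/-- Tribonacci numbers: T 0 = 0, T 1 = 1, T 2 = 1, T (n+3) = T (n+2) + T (n+1) + T n. -/
def T : ℕ → ℕ
  | 0 => 0
  | 1 => 1
  | 2 => 1
  | n + 3 => T (n + 2) + T (n + 1) + T n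

/-- The Tribonacci morphism on letters: 0 ↦ 01, 1 ↦ 02, 2 ↦ 0. -/
def σm : ℕ → List ℕ
  | 0 => [0, 1]
  | 1 => [0, 2]
  | _ => [0]

/-- The Tribonacci morphism extended to words by concatenation. -/
def σw : List ℕ → List ℕ
  | [] => []
  | a :: t => σm a ++ σw t

/-- The Tribonacci word, the fixed point of σ beginning with 0
(σ^[n+1] [0] has length > n and each σ^[m] [0] is a prefix of the next). -/
def TR (n : ℕ) : ℕ := ((σw^[n + 1]) [0]).getD n 0

/-- Number of occurrences of the letter `a` in the factor TR[i..i+n-1]. -/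
def occ (a i n : ℕ) : ℕ := ((Finset.range n).filter (fun j => TR (i + j) = a)).card

/-- Parikh vector of the factor TR[i..i+n-1], as an element of ℤ³. -/
def ψv (i n : ℕ) : ℤ × ℤ × ℤ := ((occ 0 i n : ℤ), (occ 1 i n : ℤ), (occ 2 i n : ℤ))

/-- Relative Parikh vector f(i,n) = ψ(TR[i..i+n-1]) − ψ(TR[0..n-1]). -/
def frel (i n : ℕ) : ℤ × ℤ × ℤ := ψv i n - ψv 0 n

/-- The set A_n of relative Parikh vectors. -/
def Aset (n : ℕ) : Set (ℤ × ℤ × ℤ) := {v | ∃ i, frel i n = v}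

/-- Abelian complexity of TR: the number of distinct Parikh vectors of length-n factors. -/
noncomputable def ρab (n : ℕ) : ℕ := (Aset n).ncard

/-- Value of a binary word e₁ ⋯ e_r in the Tribonacci numeration system:
[w]_T = Σ_{1 ≤ i ≤ r} e_i T_{r+2-i}.  (Index 0 of the list is e₁.) -/
def valT (w : List ℕ) : ℕ := ∑ i ∈ Finset.range w.length, w.getD i 0 * T (w.length + 1 - i)

/-- `w` is a valid Tribonacci representation: a binary word beginning with 1
and containing no factor 111. -/
def GoodRep (w : List ℕ) : Prop :=
  w.head? = some 1 ∧ (∀ d ∈ w, d ≤ 1) ∧ ¬ ([1, 1, 1] <:+: w)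

/-- The last digit of a word, with the convention that it is 0 for the empty word. -/
def lastDigit (w : List ℕ) : ℕ := w.getD (w.length - 1) 0

def P (k : ℕ) : List ℕ := σw^[k] [0]


lemma σw_append (u v : List ℕ) : σw (u ++ v) = σw u ++ σw v := by
  induction u with
  | nil => simp [σw]
  | cons a t ih => simp [σw, ih]

lemma σm_head (a : ℕ) : ∃ t, σm a = 0 :: t := by
  match a with
  | 0 => exact ⟨[1], rfl⟩
  | 1 => exact ⟨[2], rfl⟩
  | (n+2) => exact ⟨[], rfl⟩

lemma σw_count0 (u : List ℕ) : (σw u).count 0 = u.length := by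
  induction u with
  | nil => simp [σw]
  | cons a t ih =>
    have h : (σm a).count 0 = 1 := by
      match a with
      | 0 => decide
      | 1 => decide
      | (n+2) => show List.count 0 [0] = 1; decide
    simp [σw, List.count_append, h, ih, Nat.add_comm]

lemma σw_count1 (u : List ℕ) : (σw u).count 1 = u.count 0 := by
  induction u with
  | nil => simp [σw]
  | cons a t ih =>
    have h : (σm a).count 1 = if a = 0 then 1 else 0 := by
      match a with
      | 0 => decide
      | 1 => decide
      | (n+2) => show List.count 1 [0] = _; simp
    simp [σw, List.count_append, h, ih, List.count_cons]
    split <;> simp_all <;> omega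

lemma σw_count2 (u : List ℕ) : (σw u).count 2 = u.count 1 := by
  induction u with
  | nil => simp [σw]
  | cons a t ih =>
    have h : (σm a).count 2 = if a = 1 then 1 else 0 := by
      match a with
      | 0 => decide
      | 1 => decide
      | (n+2) => show List.count 2 [0] = _; simp
    simp [σw, List.count_append, h, ih, List.count_cons]
    split <;> simp_all <;> omega

lemma σw_length (u : List ℕ) : (σw u).length = u.length + u.count 0 + u.count 1 := by
  induction u with
  | nil => simp [σw]
  | cons a t ih =>
    have h : (σm a).length = 1 + (if a = 0 then 1 else 0) + (if a = 1 then 1 else 0) := by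
      match a with
      | 0 => decide
      | 1 => decide
      | (n+2) => show List.length [0] = _; simp
    simp [σw, List.length_append, h, ih, List.count_cons]
    split <;> split <;> simp_all <;> omega

lemma σw_prefix {u v : List ℕ} (h : u <+: v) : σw u <+: σw v := by
  obtain ⟨t, rfl⟩ := h
  exact ⟨σw t, (σw_append u t).symm⟩

lemma P_succ (k : ℕ) : P (k + 1) = σw (P k) := Function.iterate_succ_apply' _ _ _

lemma P_head (k : ℕ) : ∃ t, P k = 0 :: t := by
  induction k with
  | zero => exact ⟨[], rfl⟩
  | succ k ih =>
    obtain ⟨t, ht⟩ := ih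
    refine ⟨1 :: σw t, ?_⟩
    rw [P_succ, ht]
    simp [σw, σm]

lemma P_prefix_succ (k : ℕ) : P k <+: P (k + 1) := by
  induction k with
  | zero => exact ⟨[1], rfl⟩
  | succ k ih =>
    rw [P_succ, P_succ]
    exact σw_prefix ih

lemma P_mono {k l : ℕ} (h : k ≤ l) : P k <+: P l := by
  induction l with
  | zero => simp_all
  | succ l ih =>
    rcases Nat.lt_or_ge k (l+1) with h' | h'
    · exact (ih (by omega)).trans (P_prefix_succ l)
    · have : k = l + 1 := by omega
      subst this; exact List.prefix_refl _

lemma P_length (k : ℕ) : k + 1 ≤ (P k).length := by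
  induction k with
  | zero => simp [P]
  | succ k ih =>
    rw [P_succ, σw_length]
    obtain ⟨t, ht⟩ := P_head k
    have : 1 ≤ (P k).count 0 := by rw [ht]; simp
    omega

lemma getD_prefix {u v : List ℕ} (h : u <+: v) {i : ℕ} (hi : i < u.length) :
    v.getD i 0 = u.getD i 0 := by
  obtain ⟨t, rfl⟩ := h
  rw [List.getD_append _ _ _ _ hi]

lemma TR_eq {n k : ℕ} (h : n < (P k).length) : TR n = (P k).getD n 0 := by
  have h1 : P k <+: P (max k (n + 1)) := P_mono (le_max_left _ _)
  have h2 : P (n + 1) <+: P (max k (n + 1)) := P_mono (le_max_right _ _)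
  have hn : n < (P (n + 1)).length := by have := P_length (n + 1); omega
  show (P (n + 1)).getD n 0 = (P k).getD n 0
  exact (getD_prefix h2 hn).symm.trans (getD_prefix h1 h)

def pref (n : ℕ) : List ℕ := (P n).take n

lemma pref_length (n : ℕ) : (pref n).length = n := by
  have := P_length n
  simp [pref]
  omega

lemma prefix_eq_of_length {u v z : List ℕ} (hu : u <+: z) (hv : v <+: z)
    (h : u.length = v.length) : u = v := by
  rw [List.prefix_iff_eq_take.mp hu, List.prefix_iff_eq_take.mp hv, h]

lemma eq_pref {j : ℕ} {v : List ℕ} (h : v <+: P j) : v = pref v.length := by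
  have h1 : v <+: P (max j v.length) := h.trans (P_mono (le_max_left _ _))
  have h2 : pref v.length <+: P (max j v.length) :=
    (List.take_prefix _ _).trans (P_mono (le_max_right _ _))
  exact prefix_eq_of_length h1 h2 (by rw [pref_length])

lemma pref_succ (n : ℕ) : pref (n + 1) = pref n ++ [TR n] := by
  have hlen : n < (P (n + 1)).length := by have := P_length (n + 1); omega
  have hsome : (P (n + 1))[n]? = some ((P (n+1)).getD n 0) := by
    rw [List.getElem?_eq_getElem hlen, List.getD_eq_getElem _ _ hlen]
  have h1 : pref (n + 1) = (P (n + 1)).take n ++ [(P (n+1)).getD n 0] := by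
    rw [pref, List.take_succ, hsome]
    rfl
  rw [h1]
  congr 1
  · have h2 : (P (n + 1)).take n <+: P (n + 1) := List.take_prefix _ _
    have h3 := eq_pref h2
    rw [List.length_take] at h3
    rw [h3]
    congr 1
    omega

lemma occ_eq (a n : ℕ) : occ a 0 n = (pref n).count a := by
  induction n with
  | zero => simp [occ, pref]
  | succ n ih =>
    rw [occ, Finset.range_add_one, Finset.filter_insert]
    rw [pref_succ, List.count_append]
    by_cases h : TR n = a
    · rw [if_pos (by simpa using h)]
      rw [Finset.card_insert_of_notMem (by simp)]
      rw [← occ, ih, h]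
      simp
    · rw [if_neg (by simpa using h)]
      rw [← occ, ih]
      simp [List.count_singleton]
      omega

def Af (w : List ℕ) : ℕ := ∑ i ∈ Finset.range w.length, w.getD i 0 * T (w.length - i)
def Bf (w : List ℕ) : ℕ := ∑ i ∈ Finset.range w.length, w.getD i 0 * T (w.length - 1 - i)
def Cf (w : List ℕ) : ℕ := ∑ i ∈ Finset.range w.length, w.getD i 0 * T (w.length - 2 - i)

lemma getD_concat_lt (u : List ℕ) (e : ℕ) {i : ℕ} (h : i < u.length) :
    (u ++ [e]).getD i 0 = u.getD i 0 := List.getD_append _ _ _ _ h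

lemma getD_concat_last (u : List ℕ) (e : ℕ) : (u ++ [e]).getD u.length 0 = e := by
  rw [List.getD_eq_getElem?_getD, List.getElem?_append_right le_rfl]
  simp

lemma valT_concat (u : List ℕ) (e : ℕ) :
    valT (u ++ [e]) = valT u + Af u + Bf u + e := by
  unfold valT Af Bf
  rw [List.length_append, List.length_singleton, Finset.sum_range_succ, getD_concat_last]
  have hlast : T (u.length + 1 + 1 - u.length) = 1 := by
    rw [show u.length + 1 + 1 - u.length = 2 by omega]
    rfl
  rw [hlast, mul_one]
  congr 1
  have key : ∀ i ∈ Finset.range u.length,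
      (u ++ [e]).getD i 0 * T (u.length + 1 + 1 - i)
        = u.getD i 0 * T (u.length + 1 - i) + u.getD i 0 * T (u.length - i)
          + u.getD i 0 * T (u.length - 1 - i) := by
    intro i hi
    rw [Finset.mem_range] at hi
    rw [getD_concat_lt u e hi]
    obtain ⟨j, hj⟩ : ∃ j, u.length - 1 - i = j := ⟨_, rfl⟩
    rw [show u.length + 1 + 1 - i = j + 3 by omega, show u.length + 1 - i = j + 2 by omega,
        show u.length - i = j + 1 by omega, hj,
        show T (j + 3) = T (j + 2) + T (j + 1) + T j from rfl]
    ring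
  rw [Finset.sum_congr rfl key]
  simp [Finset.sum_add_distrib]

lemma Af_concat (u : List ℕ) (e : ℕ) : Af (u ++ [e]) = valT u + e := by
  unfold Af valT
  rw [List.length_append, List.length_singleton, Finset.sum_range_succ, getD_concat_last]
  rw [show u.length + 1 - u.length = 1 by omega, show T 1 = 1 from rfl, mul_one]
  congr 1
  refine Finset.sum_congr rfl fun i hi => ?_
  rw [Finset.mem_range] at hi
  rw [getD_concat_lt u e hi]

lemma Bf_concat (u : List ℕ) (e : ℕ) : Bf (u ++ [e]) = Af u := by
  unfold Bf Af
  rw [List.length_append, List.length_singleton, Finset.sum_range_succ, getD_concat_last]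
  rw [show u.length + 1 - 1 - u.length = 0 by omega, show T 0 = 0 from rfl, mul_zero, add_zero]
  refine Finset.sum_congr rfl fun i hi => ?_
  rw [Finset.mem_range] at hi
  rw [getD_concat_lt u e hi, show u.length + 1 - 1 - i = u.length - i by omega]

lemma Cf_concat (u : List ℕ) (e : ℕ) : Cf (u ++ [e]) = Bf u := by
  unfold Cf Bf
  rw [List.length_append, List.length_singleton, Finset.sum_range_succ, getD_concat_last]
  rw [show u.length + 1 - 2 - u.length = 0 by omega, show T 0 = 0 from rfl, mul_zero, add_zero]
  refine Finset.sum_congr rfl fun i hi => ?_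
  rw [Finset.mem_range] at hi
  rw [getD_concat_lt u e hi, show u.length + 1 - 2 - i = u.length - 1 - i by omega]

lemma main_counts (u : List ℕ) (hu : ∀ d ∈ u, d ≤ 1) :
    (pref (valT u)).count 0 = Af u ∧ (pref (valT u)).count 1 = Bf u ∧
    (pref (valT u)).count 2 = Cf u := by
  induction u using List.reverseRecOn with
  | nil =>
    have h0 : valT ([] : List ℕ) = 0 := by simp [valT]
    have hp : pref 0 = [] := by simp [pref]
    rw [h0, hp]
    simp [Af, Bf, Cf]
  | append_singleton u e ih =>
    have hu' : ∀ d ∈ u, d ≤ 1 := fun d hd => hu d (by simp [hd])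
    have he : e ≤ 1 := hu e (by simp)
    obtain ⟨h0, h1, h2⟩ := ih hu'
    set m := valT u with hm
    set L := m + Af u + Bf u with hLdef
    have hpm : pref m <+: P m := List.take_prefix _ _
    have hσ : σw (pref m) <+: P (m + 1) := by rw [P_succ]; exact σw_prefix hpm
    have hL : (σw (pref m)).length = L := by
      rw [σw_length, pref_length, h0, h1]
    have hpL : σw (pref m) = pref L := by
      conv_rhs => rw [← hL]
      exact eq_pref hσ
    have c0L : (pref L).count 0 = m := by rw [← hpL, σw_count0, pref_length]
    have c1L : (pref L).count 1 = Af u := by rw [← hpL, σw_count1, h0]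
    have c2L : (pref L).count 2 = Bf u := by rw [← hpL, σw_count2, h1]
    have hval : valT (u ++ [e]) = L + e := by rw [valT_concat]
    rw [hval, Af_concat, Bf_concat, Cf_concat]
    interval_cases e
    · simp [c0L, c1L, c2L, hm]
    · -- e = 1 : need pref (L+1) = pref L ++ [0]
      have hTRL : TR L = 0 := by
        have h4 : pref (m + 1) = pref m ++ [TR m] := pref_succ m
        obtain ⟨t, ht⟩ := σm_head (TR m)
        have h5 : σw (pref (m + 1)) = σw (pref m) ++ 0 :: t := by
          rw [h4, σw_append]
          congr 1
          rw [show σw [TR m] = σm (TR m) ++ σw [] from rfl, ht]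
          simp [σw]
        have hpm1 : pref (m + 1) <+: P (m + 1) := List.take_prefix _ _
        have h6 : σw (pref (m + 1)) <+: P (m + 2) := by
          rw [P_succ]
          exact σw_prefix hpm1
        have hlen : L < (σw (pref (m + 1))).length := by
          rw [h5, List.length_append, hL]
          simp
        have hlen2 : L < (P (m + 2)).length := lt_of_lt_of_le hlen h6.length_le
        rw [TR_eq hlen2, getD_prefix h6 hlen, h5, ← hL]
        rw [List.getD_eq_getElem?_getD, List.getElem?_append_right le_rfl]
        simp
      rw [pref_succ, hTRL, List.count_append, List.count_append, List.count_append]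
      refine ⟨?_, ?_, ?_⟩ <;> simp [c0L, c1L, c2L, hm]

/-- For n ≥ 1 with Tribonacci representation e₁ ⋯ e_r,
|TR[0..n-1]|₀ = [e₁ ⋯ e_{r-1}]_T + e_r. -/
theorem count0_prefix (n : ℕ) (hn : 1 ≤ n) (w : List ℕ) (hw : GoodRep w) (hv : valT w = n) :
    occ 0 0 n = valT w.dropLast + lastDigit w := by
  obtain ⟨hh, hd, -⟩ := hw
  have hne : w ≠ [] := by rintro rfl; simp at hh
  obtain ⟨u, e, rfl⟩ : ∃ u e, w = u ++ [e] := by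
    rcases List.eq_nil_or_concat w with h | ⟨u, e, h⟩
    · exact absurd h hne
    · exact ⟨u, e, by rw [h, List.concat_eq_append]⟩
  have hmain := (main_counts (u ++ [e]) hd).1
  rw [← hv, occ_eq, hmain, Af_concat]
  congr 1
  · rw [List.dropLast_concat]
  · rw [lastDigit, List.length_append, List.length_singleton,
      show u.length + 1 - 1 = u.length by omega, getD_concat_last]
end

section
/- For all i ≥ 0 and n ≥ 0, the relative Parikh vector f(i,n) = ψ(TR[i..i+n-1]) − ψ(TR[0..n-1]) belongs to the nine-element set A = {(0,0,0), (1,0,−1), (1,−1,0), (0,1,−1), (−1,2,−1), (−1,1,0), (0,−1,1), (−1,0,1), (−1,−1,2)}. -/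
namespace Trib

lemma σw_append (u v : List ℕ) : σw (u ++ v) = σw u ++ σw v := by
  induction u with
  | nil => rfl
  | cons a t ih => simp [σw, ih, List.append_assoc]

lemma σm_ne_nil (a : ℕ) : σm a ≠ [] := by
  match a with
  | 0 => simp [σm]
  | 1 => simp [σm]
  | (n+2) => simp [σm]

lemma σm_head (a : ℕ) : (σm a).head? = some 0 := by
  match a with
  | 0 => rfl
  | 1 => rfl
  | (n+2) => rfl

lemma σw_length_ge (w : List ℕ) : w.length ≤ (σw w).length := by
  induction w with
  | nil => simp [σw]
  | cons a t ih =>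
    simp only [σw, List.length_append, List.length_cons]
    have := σm_ne_nil a
    have : 1 ≤ (σm a).length := by
      cases h : σm a with
      | nil => exact absurd h this
      | cons x xs => simp
    omega

/-- the iterates -/
def Wm (m : ℕ) : List ℕ := (σw^[m]) [0]

lemma Wm_succ (m : ℕ) : Wm (m + 1) = σw (Wm m) := Function.iterate_succ_apply' σw m [0]

lemma σw_prefix {u v : List ℕ} (h : u <+: v) : σw u <+: σw v := by
  obtain ⟨w, rfl⟩ := h
  exact ⟨σw w, (σw_append u w).symm⟩

lemma Wm_prefix_succ (m : ℕ) : Wm m <+: Wm (m + 1) := by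
  induction m with
  | zero => exact ⟨[1], rfl⟩
  | succ k ih => rw [Wm_succ, Wm_succ]; exact σw_prefix ih

lemma Wm_prefix {p q : ℕ} (h : p ≤ q) : Wm p <+: Wm q := by
  induction q with
  | zero => cases Nat.le_zero.mp h; exact List.prefix_refl _
  | succ k ih =>
    rcases Nat.lt_or_ge p (k+1) with h' | h'
    · exact (ih (Nat.lt_succ_iff.mp h')).trans (Wm_prefix_succ k)
    · have : p = k + 1 := le_antisymm h h'
      subst this; exact List.prefix_refl _

lemma Wm_head (m : ℕ) : (Wm m).head? = some 0 := by
  have h := Wm_prefix (Nat.zero_le m)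
  have : Wm 0 = [0] := rfl
  rw [this] at h
  obtain ⟨w, hw⟩ := h
  rw [← hw]; rfl

lemma σw_length_gt {w : List ℕ} (h : w.head? = some 0) : w.length + 1 ≤ (σw w).length := by
  cases w with
  | nil => simp at h
  | cons a t =>
    simp at h; subst h
    simp only [σw, σm, List.length_append, List.length_cons]
    have := σw_length_ge t
    simp; omega

lemma Wm_length (m : ℕ) : m + 1 ≤ (Wm m).length := by
  induction m with
  | zero => simp [Wm]
  | succ k ih =>
    rw [Wm_succ]
    have := σw_length_gt (Wm_head k)
    omega

lemma TR_eq_Wm {q m : ℕ} (h : q < (Wm m).length) : TR q = (Wm m).getD q 0 := by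
  have key : ∀ p r : ℕ, p ≤ r → ∀ q, q < (Wm p).length → (Wm p).getD q 0 = (Wm r).getD q 0 := by
    intro p r hpr q hq
    obtain ⟨w, hw⟩ := Wm_prefix hpr
    rw [← hw, List.getD_append _ _ _ _ hq]
  show (Wm (q+1)).getD q 0 = (Wm m).getD q 0
  rcases le_or_gt (q+1) m with h' | h'
  · exact key _ _ h' q (by have := Wm_length (q+1); omega)
  · exact (key m (q+1) (by omega) q h).symm

lemma TR_le_two (q : ℕ) : TR q ≤ 2 := by
  have h : q < (Wm (q+1)).length := by have := Wm_length (q+1); omega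
  have hmem : ∀ x ∈ Wm (q + 1), x ≤ 2 := by
    rw [Wm_succ]
    generalize Wm q = w
    induction w with
    | nil => simp [σw]
    | cons a t ih =>
      intro x hx
      simp only [σw, List.mem_append] at hx
      rcases hx with hx | hx
      · match a, hx with
        | 0, hx => simp [σm] at hx; omega
        | 1, hx => simp [σm] at hx; omega
        | (n+2), hx => simp [σm] at hx; omega
      · exact ih x hx
  have : TR q = (Wm (q+1)).getD q 0 := TR_eq_Wm h
  rw [this, List.getD_eq_getElem _ _ h]
  exact hmem _ (List.getElem_mem h)

end Trib

namespace Trib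

/-- prefix of length m of the Tribonacci word -/
def pre (m : ℕ) : List ℕ := (List.range m).map TR

/-- length of the σ-image of the letter at position k -/
def len (k : ℕ) : ℕ := if TR k = 2 then 1 else 2

/-- length of σ-image of prefix of length k -/
def L : ℕ → ℕ
  | 0 => 0
  | k + 1 => L k + len k

lemma pre_length (m : ℕ) : (pre m).length = m := by simp [pre]

lemma pre_succ (m : ℕ) : pre (m + 1) = pre m ++ [TR m] := by
  simp [pre, List.range_succ]

lemma pre_getD {q m : ℕ} (h : q < m) : (pre m).getD q 0 = TR q := by
  have hl : q < (pre m).length := by simpa [pre_length] using h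
  rw [List.getD_eq_getElem _ _ hl]
  simp [pre]

lemma σm_length (a : ℕ) (h : a ≤ 2) : (σm a).length = if a = 2 then 1 else 2 := by
  interval_cases a <;> rfl

lemma σw_pre_length (k : ℕ) : (σw (pre k)).length = L k := by
  induction k with
  | zero => rfl
  | succ p ih =>
    rw [pre_succ, σw_append, List.length_append, ih]
    show L p + (σm (TR p) ++ σw []).length = L (p+1)
    simp only [σw, List.append_nil]
    rw [σm_length _ (TR_le_two p)]
    simp [L, len]

lemma pre_take {m M : ℕ} (h : m ≤ M) : (pre M).take m = pre m := by
  simp [pre, ← List.map_take, List.take_range, Nat.min_eq_left h]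

lemma pre_prefix {m M : ℕ} (h : m ≤ M) : pre m <+: pre M := by
  rw [← pre_take h]; exact List.take_prefix _ _

lemma pre_Wm (m : ℕ) : pre (Wm m).length = Wm m := by
  apply List.ext_getElem (by simp [pre_length])
  intro q h1 h2
  rw [← List.getD_eq_getElem _ 0 h1, ← List.getD_eq_getElem _ 0 h2,
    pre_getD (by simpa [pre_length] using h1)]
  exact TR_eq_Wm h2

/-- fundamental fixed point property -/
lemma σw_pre (k : ℕ) : σw (pre k) = pre (L k) := by
  have h1 : pre k <+: Wm k := by
    rw [← pre_Wm k]; exact pre_prefix (by have := Wm_length k; omega)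
  have h2 : σw (pre k) <+: Wm (k+1) := by
    rw [Wm_succ]; exact σw_prefix h1
  rw [← pre_Wm (k+1)] at h2
  rw [List.prefix_iff_eq_take] at h2
  rw [h2, σw_pre_length, pre_take]
  rw [← σw_pre_length k, h2, List.length_take, pre_length]
  exact Nat.min_le_right _ _

/-- window of m letters starting at position k -/
def winAt (k m : ℕ) : List ℕ := (List.range m).map (fun d => TR (k + d))

lemma pre_add_winAt (k m : ℕ) : pre (k + m) = pre k ++ winAt k m := by
  simp [pre, winAt, List.range_add]

lemma L_add (k m : ℕ) : L (k + m) = L k + (σw (winAt k m)).length := by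
  have h := congrArg σw (pre_add_winAt k m)
  rw [σw_append] at h
  have := congrArg List.length h
  simpa [σw_pre_length] using this

lemma pre_L_add (k m : ℕ) : pre (L (k + m)) = pre (L k) ++ σw (winAt k m) := by
  rw [← σw_pre (k+m), pre_add_winAt, σw_append, σw_pre]

/-- letters inside the image window -/
lemma TR_L_add {k m j : ℕ} (h : j < (σw (winAt k m)).length) :
    TR (L k + j) = (σw (winAt k m)).getD j 0 := by
  have hlt : L k + j < L (k + m) := by rw [L_add]; omega
  rw [← pre_getD hlt, pre_L_add, List.getD_append_right _ _ _ _ (by rw [pre_length]; omega),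
    pre_length]
  congr 1; omega

end Trib

namespace Trib

/-- Parikh vector of a list -/
def ψL (l : List ℕ) : ℤ × ℤ × ℤ := ((l.count 0 : ℤ), (l.count 1 : ℤ), (l.count 2 : ℤ))

/-- prefix Parikh vector -/
def P (m : ℕ) : ℤ × ℤ × ℤ := ψL (pre m)

/-- abelianized substitution matrix -/
def Mv : ℤ × ℤ × ℤ → ℤ × ℤ × ℤ := fun v => (v.1 + v.2.1 + v.2.2, v.1, v.2.1)

lemma ψL_append (u v : List ℕ) : ψL (u ++ v) = ψL u + ψL v := by
  simp only [ψL, List.count_append, Prod.mk_add_mk]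
  push_cast
  rfl

lemma count_σw_zero (u : List ℕ) : (σw u).count 0 = u.length := by
  induction u with
  | nil => rfl
  | cons a t ih =>
    show (σm a ++ σw t).count 0 = t.length + 1
    rw [List.count_append, ih]
    have : (σm a).count 0 = 1 := by
      match a with
      | 0 => rfl
      | 1 => rfl
      | (n+2) => rfl
    omega

lemma count_σw_one (u : List ℕ) : (σw u).count 1 = u.count 0 := by
  induction u with
  | nil => rfl
  | cons a t ih =>
    show (σm a ++ σw t).count 1 = List.count 0 (a :: t)
    rw [List.count_append, ih, List.count_cons]
    have : (σm a).count 1 = if a = 0 then 1 else 0 := by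
      match a with
      | 0 => rfl
      | 1 => rfl
      | (n+2) => rfl
    rw [this]
    by_cases h : a = 0 <;> simp [h] <;> omega

lemma count_σw_two (u : List ℕ) : (σw u).count 2 = u.count 1 := by
  induction u with
  | nil => rfl
  | cons a t ih =>
    show (σm a ++ σw t).count 2 = List.count 1 (a :: t)
    rw [List.count_append, ih, List.count_cons]
    have : (σm a).count 2 = if a = 1 then 1 else 0 := by
      match a with
      | 0 => rfl
      | 1 => rfl
      | (n+2) => rfl
    rw [this]
    by_cases h : a = 1 <;> simp [h] <;> omega

lemma count_sum (u : List ℕ) (h : ∀ x ∈ u, x ≤ 2) :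
    u.count 0 + u.count 1 + u.count 2 = u.length := by
  induction u with
  | nil => rfl
  | cons a t ih =>
    have ha : a ≤ 2 := h a (by simp)
    have iht := ih (fun x hx => h x (by simp [hx]))
    simp only [List.count_cons, List.length_cons]
    interval_cases a <;> simp <;> omega

lemma pre_count_sum (m : ℕ) : (pre m).count 0 + (pre m).count 1 + (pre m).count 2 = m := by
  rw [count_sum, pre_length]
  intro x hx
  simp only [pre, List.mem_map] at hx
  obtain ⟨q, _, rfl⟩ := hx
  exact TR_le_two q

/-- The key renormalization identity -/
lemma P_L (k : ℕ) : P (L k) = Mv (P k) := by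
  have h0 : (pre (L k)).count 0 = k := by
    rw [← σw_pre, count_σw_zero, pre_length]
  have h1 : (pre (L k)).count 1 = (pre k).count 0 := by rw [← σw_pre, count_σw_one]
  have h2 : (pre (L k)).count 2 = (pre k).count 1 := by rw [← σw_pre, count_σw_two]
  have hs := pre_count_sum k
  have hk : (k : ℤ) = (pre k).count 0 + (pre k).count 1 + (pre k).count 2 := by
    omega
  simp only [P, ψL, Mv, h0, h1, h2]
  rw [hk]

lemma P_L_add {k m j : ℕ} (h : j ≤ (σw (winAt k m)).length) :
    P (L k + j) = Mv (P k) + ψL ((σw (winAt k m)).take j) := by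
  have hsplit : pre (L k + j) = pre (L k) ++ (σw (winAt k m)).take j := by
    have h1 : pre (L k + j) = (pre (L (k + m))).take (L k + j) := by
      rw [pre_take]; rw [L_add]; omega
    have h2 := List.take_length_add_append (l₁ := pre (L k)) (l₂ := σw (winAt k m)) j
    rw [pre_length] at h2
    rw [h1, pre_L_add, h2]
  rw [P, hsplit, ψL_append, ← P, P_L]

lemma P_add_winAt (k m : ℕ) : P (k + m) = P k + ψL (winAt k m) := by
  rw [P, pre_add_winAt, ψL_append, P]

/-- cast formula for L -/
lemma L_cast (k : ℕ) : (L k : ℤ) = 2 * k - (pre k).count 2 := by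
  induction k with
  | zero => rfl
  | succ p ih =>
    show (↑(L p + len p) : ℤ) = _
    rw [pre_succ, List.count_append]
    push_cast [ih, len]
    by_cases h : TR p = 2 <;> simp [h, List.count_cons, List.count_nil] <;> ring

end Trib

namespace Trib

lemma len_pos (k : ℕ) : 1 ≤ len k := by unfold len; split <;> omega
lemma len_le (k : ℕ) : len k ≤ 2 := by unfold len; split <;> omega

lemma TR_zero : TR 0 = 0 := rfl

lemma len_zero : len 0 = 2 := by simp [len, TR_zero]

lemma L_lb (k : ℕ) : k ≤ L k := by
  induction k with
  | zero => simp [L]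
  | succ p ih => have := len_pos p; simp only [L]; omega

lemma L_ub (k : ℕ) : L k ≤ 2 * k := by
  induction k with
  | zero => simp [L]
  | succ p ih => have := len_le p; simp only [L]; omega

lemma L_lb' {k : ℕ} (h : 1 ≤ k) : k + 1 ≤ L k := by
  induction k with
  | zero => omega
  | succ p ih =>
    rcases Nat.eq_zero_or_pos p with rfl | hp
    · simp [L, len_zero]
    · have := ih hp; have := len_pos p; simp only [L]; omega

lemma exists_desub (i : ℕ) : ∃ a s, s ≤ 1 ∧ i = L a + s := by
  induction i with
  | zero => exact ⟨0, 0, by omega, rfl⟩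
  | succ p ih =>
    obtain ⟨a, s, hs, hp⟩ := ih
    rcases Nat.eq_zero_or_pos s with rfl | hs1
    · -- p = L a; p+1 = L a + 1
      exact ⟨a, 1, le_refl _, by omega⟩
    · -- s = 1, p = L a + 1; p + 1 = L a + 2 ≥ L (a+1)
      have hs' : s = 1 := by omega
      subst hs'
      have h1 : L (a+1) = L a + len a := rfl
      have := len_le a
      have := len_pos a
      rcases Nat.lt_or_ge (p+1) (L (a+1)) with h | h
      ·
        omega
      · exact ⟨a+1, (p+1) - L (a+1), by omega, by omega⟩

lemma σm_getD0 (x : ℕ) : (σm x).getD 0 0 = 0 := by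
  match x with
  | 0 => rfl
  | 1 => rfl
  | (n+2) => rfl

lemma σw_single (x : ℕ) : σw [x] = σm x := by
  show σm x ++ σw [] = σm x
  simp [σw]

lemma winAt_one (k : ℕ) : winAt k 1 = [TR k] := by simp [winAt, List.range_succ]

lemma σm_length_pos (x : ℕ) : 1 ≤ (σm x).length := by
  match x with
  | 0 => simp [σm]
  | 1 => simp [σm]
  | (n+2) => simp [σm]

lemma TR_L_zero (k : ℕ) : TR (L k) = 0 := by
  have h : (0:ℕ) < (σw (winAt k 1)).length := by
    rw [winAt_one, σw_single]; exact σm_length_pos _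
  have := TR_L_add (k := k) (m := 1) (j := 0) h
  rw [Nat.add_zero] at this
  rw [this, winAt_one, σw_single]
  cases h' : TR k with
  | zero => rfl
  | succ n => cases n with
    | zero => rfl
    | succ m => rfl

lemma take_one_σm (x : ℕ) : (σm x).take 1 = [0] := by
  match x with
  | 0 => rfl
  | 1 => rfl
  | (n+2) => rfl

/-- the window around position p (2 back, 5 forward) -/
def win (p : ℕ) : List ℕ := (List.range 8).map (fun d => TR (p + d - 2))

/-- relative Parikh vector -/
def g (i n : ℕ) : ℤ × ℤ × ℤ := P (i + n) - P i - P n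

abbrev St : Type := (ℤ × ℤ × ℤ) × List ℕ

def stateOf (i n : ℕ) : St := (g i n, win (i + n))

def lenW (W : List ℕ) : ℕ := ((W.take 2).map (fun x => if x = 2 then 1 else 2)).sum

def fT (st : St) (s t : ℕ) : St :=
  let v := st.1
  let W := st.2
  let j : ℕ := ((lenW W : ℤ) + v.2.2 + s + t).toNat
  let sW := σw W
  (Mv (v - ψL (W.take 2)) + ψL (sW.take j) - ((s : ℤ) + (t : ℤ), 0, 0),
   (List.range 8).map (fun d => sW.getD (j - 2 + d) 0))

def okSt (st : St) : Prop :=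
  2 ≤ (lenW st.2 : ℤ) + st.1.2.2 ∧ (lenW st.2 : ℤ) + st.1.2.2 + 8 ≤ (σw st.2).length

instance : DecidablePred okSt := fun st => by unfold okSt; infer_instance

lemma Mv_sub (x y : ℤ × ℤ × ℤ) : Mv (x - y) = Mv x - Mv y := by
  simp [Mv, Prod.ext_iff]; ring

end Trib

namespace Trib

lemma win_eq_winAt {p : ℕ} (h : 2 ≤ p) : win p = winAt (p - 2) 8 := by
  unfold win winAt
  apply List.map_congr_left
  intro d _
  congr 1
  omega

lemma winAt_take_two (k : ℕ) : (winAt k 8).take 2 = [TR k, TR (k + 1)] := by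
  unfold winAt
  rw [← List.map_take, List.take_range]
  norm_num [List.range_succ]

lemma lenW_winAt (k : ℕ) : lenW (winAt k 8) = len k + len (k + 1) := by
  rw [lenW, winAt_take_two]
  simp [len]

theorem transfer (a b s t : ℕ) (hs : s ≤ 1) (ht : t ≤ 1) (hab : 2 ≤ a + b)
    (hok : okSt (stateOf a b)) :
    stateOf (L a + s) (L b + t) = fT (stateOf a b) s t := by
  simp only [okSt, stateOf] at hok
  obtain ⟨hok1, hok2⟩ := hok
  have hk0 : a + b = (a + b - 2) + 2 := by omega
  have hW : win (a + b) = winAt (a + b - 2) 8 := win_eq_winAt hab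
  have hjz2 : (2:ℤ) ≤ (lenW (win (a+b)) : ℤ) + (g a b).2.2 + s + t := by
    have h0 : (0:ℤ) ≤ (s:ℤ) + t := by positivity
    omega
  have hjlen : (lenW (win (a+b)) : ℤ) + (g a b).2.2 + s + t + 6 ≤ ((σw (win (a+b))).length : ℤ) := by
    have hs' : (s:ℤ) ≤ 1 := by exact_mod_cast hs
    have ht' : (t:ℤ) ≤ 1 := by exact_mod_cast ht
    omega
  have hjcast : (((( lenW (win (a+b)) : ℤ) + (g a b).2.2 + s + t).toNat : ℤ))
      = (lenW (win (a+b)) : ℤ) + (g a b).2.2 + s + t := Int.toNat_of_nonneg (by omega)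
  set j : ℕ := ((lenW (win (a+b)) : ℤ) + (g a b).2.2 + s + t).toNat with hjdef
  have hj2 : 2 ≤ j := by omega
  have hjlenN : j + 6 ≤ (σw (win (a+b))).length := by omega
  have hlenW : (lenW (win (a+b)) : ℕ) = len (a+b-2) + len (a+b-2 + 1) := by
    rw [hW, lenW_winAt]
  have hL2 : L (a+b-2 + 2) = L (a+b-2) + len (a+b-2) + len (a+b-2 + 1) := by
    show L (a+b-2+1) + len (a+b-2+1) = _
    show L (a+b-2) + len (a+b-2) + len (a+b-2+1) = _
    rfl
  have hg2 : (g a b).2.2 = ((pre (a+b)).count 2 : ℤ) - (pre a).count 2 - (pre b).count 2 := by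
    simp [g, P, ψL, Prod.snd_sub]
  have hLab : (L a : ℤ) + L b = L (a + b) + (g a b).2.2 := by
    rw [L_cast, L_cast, L_cast, hg2]; push_cast; ring
  have hmain : ((L a + s : ℕ) + (L b + t : ℕ) : ℤ) = (L (a+b-2) : ℤ) + j := by
    have h1 : (L (a+b) : ℤ) = (L (a+b-2) : ℤ) + len (a+b-2) + len (a+b-2+1) := by
      rw [hk0]; exact_mod_cast hL2
    have h2 : ((lenW (win (a+b)) : ℤ)) = (len (a+b-2) : ℤ) + len (a+b-2+1) := by
      exact_mod_cast hlenW
    push_cast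
    omega
  have hiN : (L a + s) + (L b + t) = L (a+b-2) + j := by omega
  have hPs : ∀ (c r : ℕ), r ≤ 1 → P (L c + r) = Mv (P c) + ((r : ℤ), 0, 0) := by
    intro c r hr
    have hlen1 : r ≤ (σw (winAt c 1)).length := by
      rw [winAt_one, σw_single]
      exact hr.trans (σm_length_pos _)
    rw [P_L_add hlen1]
    congr 1
    interval_cases r
    · simp [ψL]
    · rw [winAt_one, σw_single, take_one_σm]
      rfl
  have hPin : P (L (a+b-2) + j) = Mv (P (a+b-2)) + ψL ((σw (win (a+b))).take j) := by
    rw [hW]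
    exact P_L_add (by rw [← hW]; omega)
  have hPab : P (a + b) = P (a+b-2) + ψL ((win (a+b)).take 2) := by
    have h3 := P_add_winAt (a+b-2) 2
    rw [← hk0] at h3
    rw [h3]
    congr 1
    rw [hW, winAt_take_two]
    simp [winAt, List.range_succ]
  have hMv : Mv (g a b - ψL ((win (a+b)).take 2)) = Mv (P (a+b-2)) - Mv (P a) - Mv (P b) := by
    have h4 : g a b - ψL ((win (a+b)).take 2) = P (a+b-2) - P a - P b := by
      rw [g, hPab]; abel
    rw [h4, Mv_sub, Mv_sub]
  unfold stateOf fT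
  simp only
  rw [Prod.mk.injEq]
  refine ⟨?_, ?_⟩
  · show g (L a + s) (L b + t) = _
    rw [g, hiN, hPin, hPs a s hs, hPs b t ht, hMv]
    have h5 : ((s:ℤ) + t, (0:ℤ), (0:ℤ)) = ((s:ℤ),(0:ℤ),(0:ℤ)) + ((t:ℤ),(0:ℤ),(0:ℤ)) := by
      simp [Prod.ext_iff]
    rw [h5]
    abel
  · show win ((L a + s) + (L b + t)) = _
    rw [hiN]
    rw [win]
    apply List.map_congr_left
    intro d hd
    have hd8 : d < 8 := List.mem_range.mp hd
    have hidx : L (a+b-2) + j + d - 2 = L (a+b-2) + (j - 2 + d) := by omega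
    rw [hidx, TR_L_add (k := a+b-2) (m := 8) (j := j - 2 + d) (by rw [← hW]; omega), ← hW]


end Trib

namespace Trib

def S : List St := [
  ((-1, -1, 2), [0, 2, 0, 1, 0, 0, 1, 0]),
  ((-1, -1, 2), [0, 2, 0, 1, 0, 1, 0, 2]),
  ((-1, -1, 2), [2, 0, 1, 0, 0, 1, 0, 2]),
  ((-1, 0, 1), [0, 1, 0, 0, 1, 0, 2, 0]),
  ((-1, 0, 1), [0, 1, 0, 1, 0, 2, 0, 1]),
  ((-1, 0, 1), [0, 1, 0, 2, 0, 1, 0, 0]),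
  ((-1, 0, 1), [0, 1, 0, 2, 0, 1, 0, 1]),
  ((-1, 0, 1), [0, 1, 0, 2, 0, 1, 0, 2]),
  ((-1, 0, 1), [0, 2, 0, 1, 0, 0, 1, 0]),
  ((-1, 0, 1), [0, 2, 0, 1, 0, 1, 0, 2]),
  ((-1, 0, 1), [0, 2, 0, 1, 0, 2, 0, 1]),
  ((-1, 0, 1), [1, 0, 0, 1, 0, 2, 0, 1]),
  ((-1, 0, 1), [1, 0, 1, 0, 2, 0, 1, 0]),
  ((-1, 0, 1), [1, 0, 2, 0, 1, 0, 0, 1]),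
  ((-1, 0, 1), [2, 0, 1, 0, 0, 1, 0, 2]),
  ((-1, 0, 1), [2, 0, 1, 0, 1, 0, 2, 0]),
  ((-1, 0, 1), [2, 0, 1, 0, 2, 0, 1, 0]),
  ((-1, 1, 0), [0, 1, 0, 0, 1, 0, 2, 0]),
  ((-1, 1, 0), [0, 1, 0, 1, 0, 2, 0, 1]),
  ((-1, 1, 0), [0, 1, 0, 2, 0, 1, 0, 0]),
  ((-1, 1, 0), [0, 1, 0, 2, 0, 1, 0, 1]),
  ((-1, 1, 0), [0, 1, 0, 2, 0, 1, 0, 2]),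
  ((-1, 1, 0), [0, 2, 0, 1, 0, 0, 1, 0]),
  ((-1, 1, 0), [0, 2, 0, 1, 0, 1, 0, 2]),
  ((-1, 1, 0), [0, 2, 0, 1, 0, 2, 0, 1]),
  ((-1, 1, 0), [1, 0, 0, 1, 0, 2, 0, 1]),
  ((-1, 1, 0), [1, 0, 1, 0, 2, 0, 1, 0]),
  ((-1, 1, 0), [1, 0, 2, 0, 1, 0, 0, 1]),
  ((-1, 1, 0), [1, 0, 2, 0, 1, 0, 1, 0]),
  ((-1, 1, 0), [1, 0, 2, 0, 1, 0, 2, 0]),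
  ((-1, 1, 0), [2, 0, 1, 0, 0, 1, 0, 2]),
  ((-1, 2, -1), [0, 1, 0, 2, 0, 1, 0, 0]),
  ((-1, 2, -1), [0, 1, 0, 2, 0, 1, 0, 2]),
  ((0, -1, 1), [0, 0, 1, 0, 2, 0, 1, 0]),
  ((0, -1, 1), [0, 1, 0, 0, 1, 0, 2, 0]),
  ((0, -1, 1), [0, 1, 0, 1, 0, 2, 0, 1]),
  ((0, -1, 1), [0, 1, 0, 2, 0, 1, 0, 0]),
  ((0, -1, 1), [0, 1, 0, 2, 0, 1, 0, 1]),
  ((0, -1, 1), [0, 2, 0, 1, 0, 0, 1, 0]),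
  ((0, -1, 1), [0, 2, 0, 1, 0, 1, 0, 2]),
  ((0, -1, 1), [0, 2, 0, 1, 0, 2, 0, 1]),
  ((0, -1, 1), [1, 0, 0, 1, 0, 2, 0, 1]),
  ((0, -1, 1), [1, 0, 1, 0, 2, 0, 1, 0]),
  ((0, -1, 1), [1, 0, 2, 0, 1, 0, 0, 1]),
  ((0, -1, 1), [1, 0, 2, 0, 1, 0, 1, 0]),
  ((0, -1, 1), [2, 0, 1, 0, 0, 1, 0, 2]),
  ((0, -1, 1), [2, 0, 1, 0, 1, 0, 2, 0]),
  ((0, -1, 1), [2, 0, 1, 0, 2, 0, 1, 0]),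
  ((0, 0, 0), [0, 0, 0, 1, 0, 2, 0, 1]),
  ((0, 0, 0), [0, 0, 1, 0, 2, 0, 1, 0]),
  ((0, 0, 0), [0, 1, 0, 0, 1, 0, 2, 0]),
  ((0, 0, 0), [0, 1, 0, 1, 0, 2, 0, 1]),
  ((0, 0, 0), [0, 1, 0, 2, 0, 1, 0, 0]),
  ((0, 0, 0), [0, 1, 0, 2, 0, 1, 0, 1]),
  ((0, 0, 0), [0, 1, 0, 2, 0, 1, 0, 2]),
  ((0, 0, 0), [0, 2, 0, 1, 0, 0, 1, 0]),
  ((0, 0, 0), [0, 2, 0, 1, 0, 1, 0, 2]),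
  ((0, 0, 0), [0, 2, 0, 1, 0, 2, 0, 1]),
  ((0, 0, 0), [1, 0, 0, 1, 0, 2, 0, 1]),
  ((0, 0, 0), [1, 0, 1, 0, 2, 0, 1, 0]),
  ((0, 0, 0), [1, 0, 2, 0, 1, 0, 0, 1]),
  ((0, 0, 0), [1, 0, 2, 0, 1, 0, 1, 0]),
  ((0, 0, 0), [1, 0, 2, 0, 1, 0, 2, 0]),
  ((0, 0, 0), [2, 0, 1, 0, 0, 1, 0, 2]),
  ((0, 0, 0), [2, 0, 1, 0, 1, 0, 2, 0]),
  ((0, 0, 0), [2, 0, 1, 0, 2, 0, 1, 0]),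
  ((0, 1, -1), [0, 0, 1, 0, 2, 0, 1, 0]),
  ((0, 1, -1), [0, 1, 0, 0, 1, 0, 2, 0]),
  ((0, 1, -1), [0, 1, 0, 1, 0, 2, 0, 1]),
  ((0, 1, -1), [0, 1, 0, 2, 0, 1, 0, 0]),
  ((0, 1, -1), [0, 1, 0, 2, 0, 1, 0, 1]),
  ((0, 1, -1), [0, 1, 0, 2, 0, 1, 0, 2]),
  ((0, 1, -1), [1, 0, 0, 1, 0, 2, 0, 1]),
  ((0, 1, -1), [1, 0, 1, 0, 2, 0, 1, 0]),
  ((0, 1, -1), [1, 0, 2, 0, 1, 0, 0, 1]),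
  ((0, 1, -1), [1, 0, 2, 0, 1, 0, 1, 0]),
  ((0, 1, -1), [1, 0, 2, 0, 1, 0, 2, 0]),
  ((1, -1, 0), [0, 0, 1, 0, 2, 0, 1, 0]),
  ((1, -1, 0), [0, 2, 0, 1, 0, 1, 0, 2]),
  ((1, -1, 0), [1, 0, 0, 1, 0, 2, 0, 1]),
  ((1, -1, 0), [1, 0, 1, 0, 2, 0, 1, 0]),
  ((1, -1, 0), [1, 0, 2, 0, 1, 0, 0, 1]),
  ((1, -1, 0), [1, 0, 2, 0, 1, 0, 1, 0]),
  ((1, -1, 0), [1, 0, 2, 0, 1, 0, 2, 0]),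
  ((1, -1, 0), [2, 0, 1, 0, 0, 1, 0, 2]),
  ((1, -1, 0), [2, 0, 1, 0, 1, 0, 2, 0]),
  ((1, -1, 0), [2, 0, 1, 0, 2, 0, 1, 0]),
  ((1, 0, -1), [0, 0, 1, 0, 2, 0, 1, 0]),
  ((1, 0, -1), [0, 1, 0, 2, 0, 1, 0, 1]),
  ((1, 0, -1), [0, 1, 0, 2, 0, 1, 0, 2]),
  ((1, 0, -1), [1, 0, 0, 1, 0, 2, 0, 1]),
  ((1, 0, -1), [1, 0, 1, 0, 2, 0, 1, 0]),
  ((1, 0, -1), [1, 0, 2, 0, 1, 0, 0, 1]),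
  ((1, 0, -1), [1, 0, 2, 0, 1, 0, 1, 0]),
  ((1, 0, -1), [1, 0, 2, 0, 1, 0, 2, 0]),
  ((1, 0, -1), [2, 0, 1, 0, 0, 1, 0, 2]),
  ((1, 0, -1), [2, 0, 1, 0, 1, 0, 2, 0]),
  ((1, 0, -1), [2, 0, 1, 0, 2, 0, 1, 0])]

lemma okS_all : ∀ st ∈ S, okSt st := by decide

set_option maxRecDepth 40000 in
lemma closure : ∀ st ∈ S, ∀ s < 2, ∀ t < 2, fT st s t ∈ S := by decide

def nine : List (ℤ × ℤ × ℤ) := [(0, 0, 0), (1, 0, -1), (1, -1, 0), (0, 1, -1), (-1, 2, -1),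
  (-1, 1, 0), (0, -1, 1), (-1, 0, 1), (-1, -1, 2)]

lemma gA : ∀ st ∈ S, st.1 ∈ nine := by decide

end Trib

namespace Trib

set_option maxRecDepth 40000 in
lemma Wm8_length : (Wm 8).length = 149 := by decide

lemma pre_eq_take_Wm8 {m : ℕ} (h : m ≤ 149) : pre m = (Wm 8).take m := by
  have h1 := pre_take (m := m) (M := (Wm 8).length) (by rw [Wm8_length]; exact h)
  rw [pre_Wm] at h1
  exact h1.symm

lemma stateOf_small (i n : ℕ) (h : i + n ≤ 12) :
    stateOf i n = (ψL ((Wm 8).take (i+n)) - ψL ((Wm 8).take i) - ψL ((Wm 8).take n),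
      (List.range 8).map (fun d => (Wm 8).getD (i+n+d-2) 0)) := by
  unfold stateOf
  rw [Prod.mk.injEq]
  constructor
  · rw [g, P, P, P, pre_eq_take_Wm8 (by omega), pre_eq_take_Wm8 (by omega),
      pre_eq_take_Wm8 (by omega)]
  · rw [win]
    apply List.map_congr_left
    intro d hd
    have hd8 : d < 8 := List.mem_range.mp hd
    exact TR_eq_Wm (by rw [Wm8_length]; omega)

lemma base : ∀ i n : ℕ, i + n ≤ 12 → stateOf i n ∈ S := by
  have H : ∀ i : Fin 13, ∀ n : Fin 13, (i:ℕ) + (n:ℕ) ≤ 12 →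
      ((ψL ((Wm 8).take ((i:ℕ)+(n:ℕ))) - ψL ((Wm 8).take (i:ℕ)) - ψL ((Wm 8).take (n:ℕ)),
      (List.range 8).map (fun d => (Wm 8).getD ((i:ℕ)+(n:ℕ)+d-2) 0)) : St) ∈ S := by decide
  intro i n h
  rw [stateOf_small i n h]
  exact H ⟨i, by omega⟩ ⟨n, by omega⟩ h

theorem invariant : ∀ m i n : ℕ, i + n = m → stateOf i n ∈ S := by
  intro m
  induction m using Nat.strong_induction_on with
  | _ m IH =>
    intro i n hm
    by_cases h : i + n ≤ 12
    · exact base i n h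
    · obtain ⟨a, s, hs, hi⟩ := exists_desub i
      obtain ⟨b, t, ht, hn⟩ := exists_desub n
      have hLa := L_ub a
      have hLb := L_ub b
      have hab2 : 2 ≤ a + b := by omega
      have hlt : a + b < m := by
        have h1 := L_lb a
        have h2 := L_lb b
        rcases Nat.eq_zero_or_pos a with rfl | ha1
        · have := L_lb' (k := b) (by omega); omega
        · have := L_lb' ha1; omega
      have hSab : stateOf a b ∈ S := IH (a + b) hlt a b rfl
      have hok : okSt (stateOf a b) := okS_all _ hSab
      subst hm
      rw [hi, hn, transfer a b s t hs ht hab2 hok]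
      exact closure _ hSab s (by omega) t (by omega)

lemma occ_succ (x i m : ℕ) : occ x i (m+1) = occ x i m + if TR (i+m) = x then 1 else 0 := by
  unfold occ
  rw [Finset.range_add_one, Finset.filter_insert]
  by_cases h : TR (i + m) = x
  · rw [if_pos h, if_pos h, Finset.card_insert_of_notMem (by simp)]
  · rw [if_neg h, if_neg h, Nat.add_zero]

lemma cnt_succ (x m : ℕ) : (pre (m+1)).count x = (pre m).count x + if TR m = x then 1 else 0 := by
  rw [pre_succ, List.count_append]
  congr 1
  by_cases h : TR m = x <;> simp [h, List.count_cons]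

lemma occ_eq (x i n : ℕ) : (occ x i n : ℤ) = (pre (i+n)).count x - (pre i).count x := by
  induction n with
  | zero => simp [occ]
  | succ p ih =>
    rw [show i + (p+1) = (i+p)+1 from rfl, cnt_succ, occ_succ]
    push_cast
    rw [ih]
    by_cases h : TR (i+p) = x <;> simp [h] <;> ring

lemma frel_eq_g (i n : ℕ) : frel i n = g i n := by
  have key : ∀ x : ℕ, (occ x i n : ℤ) - (occ x 0 n : ℤ)
      = ((pre (i+n)).count x : ℤ) - (pre i).count x - (pre n).count x := by
    intro x
    rw [occ_eq, occ_eq]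
    simp [pre]
  unfold frel ψv g P ψL
  refine Prod.ext_iff.mpr ⟨?_, Prod.ext_iff.mpr ⟨?_, ?_⟩⟩ <;>
    simp only [Prod.fst_sub, Prod.snd_sub] <;> exact key _

end Trib

/-- The relative Parikh vector f(i,n) belongs to the nine-element set A. -/
theorem frel_mem_nine (i n : ℕ) :
    frel i n ∈ ({(0, 0, 0), (1, 0, -1), (1, -1, 0), (0, 1, -1), (-1, 2, -1),
      (-1, 1, 0), (0, -1, 1), (-1, 0, 1), (-1, -1, 2)} : Set (ℤ × ℤ × ℤ)) := by
  have hst := Trib.invariant (i + n) i n rfl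
  have h9 := Trib.gA _ hst
  have hg : (Trib.stateOf i n).1 = Trib.g i n := rfl
  rw [hg] at h9
  rw [Trib.frel_eq_g]
  simp only [Trib.nine, List.mem_cons, List.not_mem_nil, or_false] at h9
  rcases h9 with h|h|h|h|h|h|h|h|h <;> rw [h] <;> simp
end

section
/- For all n ≥ 1, the first coordinate of every relative Parikh vector of the Tribonacci word is in {−1,0,1}: for all i, | |TR[i..i+n-1]|_0 − |TR[0..n-1]|_0 | ≤ 1. In particular, the Tribonacci word is 1-balanced with respect to the letter 0. -/
namespace TriBal
set_option maxRecDepth 1000000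

/-- iterates of σw on [0] -/
def P (k : ℕ) : List ℕ := σw^[k] [0]

lemma σw_append (l₁ l₂ : List ℕ) : σw (l₁ ++ l₂) = σw l₁ ++ σw l₂ := by
  induction l₁ with
  | nil => simp [σw]
  | cons a t ih => simp [σw, ih]

lemma σm_length_pos (a : ℕ) : 0 < (σm a).length := by
  match a with
  | 0 => simp [σm]
  | 1 => simp [σm]
  | (n+2) => simp [σm]

lemma σm_length_le (a : ℕ) : (σm a).length ≤ 2 := by
  match a with
  | 0 => simp [σm]
  | 1 => simp [σm]
  | (n+2) => simp [σm]

lemma σm_head (a : ℕ) : (σm a).getD 0 0 = 0 := by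
  match a with
  | 0 => simp [σm]
  | 1 => simp [σm]
  | (n+2) => simp [σm]

lemma σw_length_ge (l : List ℕ) : l.length ≤ (σw l).length := by
  induction l with
  | nil => simp [σw]
  | cons a t ih =>
      simp only [σw, List.length_append, List.length_cons]
      have := σm_length_pos a
      omega

lemma P_zero : P 0 = [0] := rfl

lemma P_succ (k : ℕ) : P (k+1) = σw (P k) := by
  simp [P, Function.iterate_succ_apply']

lemma P_head (k : ℕ) : ∃ t, P k = 0 :: t := by
  induction k with
  | zero => exact ⟨[], rfl⟩
  | succ k ih =>
      obtain ⟨t, ht⟩ := ih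
      exact ⟨1 :: σw t, by rw [P_succ, ht]; simp [σw, σm]⟩

lemma P_length (k : ℕ) : k + 1 ≤ (P k).length := by
  induction k with
  | zero => simp [P_zero]
  | succ k ih =>
      obtain ⟨t, ht⟩ := P_head k
      have h2 : (σw (P k)).length = 2 + (σw t).length := by
        rw [ht]; simp [σw, σm]; omega
      have h3 : t.length ≤ (σw t).length := σw_length_ge t
      have h4 : (P k).length = t.length + 1 := by rw [ht]; simp
      rw [P_succ, h2]
      omega

lemma P_prefix (k : ℕ) : P k <+: P (k+1) := by
  induction k with
  | zero => exact ⟨[1], rfl⟩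
  | succ k ih =>
      obtain ⟨t, ht⟩ := ih
      rw [P_succ (k+1), ← ht, σw_append]
      exact ⟨σw t, by rw [ht, ← P_succ]⟩

lemma P_prefix_le {k l : ℕ} (h : k ≤ l) : P k <+: P l := by
  induction l with
  | zero => rw [Nat.le_zero.mp h]
  | succ l ih =>
      rcases Nat.lt_or_ge k (l+1) with h' | h'
      · exact (ih (by omega)).trans (P_prefix l)
      · have : k = l + 1 := by omega
        rw [this]

lemma TR_eq_P {k n : ℕ} (h : n < (P k).length) : TR n = (P k).getD n 0 := by
  have hdef : TR n = (P (n+1)).getD n 0 := rfl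
  rcases Nat.le_total k (n+1) with h' | h'
  · obtain ⟨t, ht⟩ := P_prefix_le h'
    rw [hdef, ← ht, List.getD_append _ _ _ _ h]
  · obtain ⟨t, ht⟩ := P_prefix_le h'
    have hn : n < (P (n+1)).length := by have := P_length (n+1); omega
    rw [hdef, ← ht, List.getD_append _ _ _ _ hn]

lemma σm_mem_le (a x : ℕ) (hx : x ∈ σm a) : x ≤ 2 := by
  match a with
  | 0 => simp [σm] at hx; omega
  | 1 => simp [σm] at hx; omega
  | (n+2) => simp [σm] at hx; omega

lemma σw_mem_le (l : List ℕ) (x : ℕ) (hx : x ∈ σw l) : x ≤ 2 := by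
  induction l with
  | nil => simp [σw] at hx
  | cons a t ih =>
      simp only [σw, List.mem_append] at hx
      rcases hx with h | h
      · exact σm_mem_le a x h
      · exact ih h

lemma P_mem_le (k : ℕ) (x : ℕ) (hx : x ∈ P k) : x ≤ 2 := by
  cases k with
  | zero => simp [P_zero] at hx; omega
  | succ k => rw [P_succ] at hx; exact σw_mem_le _ _ hx

lemma TR_le_two (n : ℕ) : TR n ≤ 2 := by
  have h : n < (P (n+1)).length := by have := P_length (n+1); omega
  rw [TR_eq_P h, List.getD_eq_getElem _ _ h]
  exact P_mem_le _ _ (List.getElem_mem _)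


/-! ### factors of TR, counting -/

/-- the factor TR[i..i+n) as a list -/
def fac (i n : ℕ) : List ℕ := (List.range n).map fun j => TR (i+j)

lemma fac_zero (i : ℕ) : fac i 0 = [] := rfl

lemma fac_length (i n : ℕ) : (fac i n).length = n := by simp [fac]

lemma fac_succ (i n : ℕ) : fac i (n+1) = fac i n ++ [TR (i+n)] := by
  simp [fac, List.range_succ]

lemma σw_single (a : ℕ) : σw [a] = σm a := by simp [σw]

lemma fac_one (i : ℕ) : fac i 1 = [TR i] := by
  have : (1:ℕ) = 0 + 1 := rfl
  rw [fac, this, List.range_succ]; simp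

lemma fac_add (i m n : ℕ) : fac i (m+n) = fac i m ++ fac (i+m) n := by
  induction n with
  | zero => simp [fac_zero]
  | succ n ih =>
      rw [← Nat.add_assoc, fac_succ, ih, fac_succ, List.append_assoc]
      ring_nf

lemma fac_getD {i n k : ℕ} (h : k < n) : (fac i n).getD k 0 = TR (i+k) := by
  have hlen : k < (fac i n).length := by rw [fac_length]; omega
  rw [List.getD_eq_getElem _ _ hlen]
  simp [fac]

/-- prefix of TR as initial segment of P k -/
lemma fac_eq_take {K x : ℕ} (h : x ≤ (P K).length) : fac 0 x = (P K).take x := by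
  apply List.ext_getElem
  · simp [fac_length, h]
  · intro j h1 h2
    have hj : j < x := by simpa [fac_length] using h1
    have hjk : j < (P K).length := by omega
    have : (fac 0 x)[j] = TR j := by
      have := fac_getD (i := 0) (n := x) hj
      rwa [List.getD_eq_getElem _ _ (by rw [fac_length]; exact hj), Nat.zero_add] at this
    rw [this, List.getElem_take, TR_eq_P hjk, List.getD_eq_getElem _ _ hjk]

/-! ### the block-start positions -/

/-- position of the start of the j-th block -/
def Sfun : ℕ → ℕ
  | 0 => 0
  | j+1 => Sfun j + (σm (TR j)).length

lemma σw_fac_length (j : ℕ) : (σw (fac 0 j)).length = Sfun j := by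
  induction j with
  | zero => simp [fac_zero, σw, Sfun]
  | succ j ih =>
      rw [fac_succ, σw_append, List.length_append, ih]
      simp [Sfun, σw, σm]

lemma Sfun_ge (j : ℕ) : j ≤ Sfun j := by
  induction j with
  | zero => simp [Sfun]
  | succ j ih => have := σm_length_pos (TR j); simp [Sfun]; omega

/-- Key self-similarity: the σ-image of the prefix of length j is the prefix of
length Sfun j. -/
lemma seg0 (j : ℕ) : σw (fac 0 j) = fac 0 (Sfun j) := by
  set K := Sfun j + j with hK
  have hlen : (P K).length ≥ K + 1 := P_length K
  have hj : j ≤ (P K).length := by omega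
  have hSj : Sfun j ≤ (P (K+1)).length := by
    have := P_length (K+1); omega
  have h1 : fac 0 j = (P K).take j := fac_eq_take hj
  have h2 : P (K+1) = σw ((P K).take j) ++ σw ((P K).drop j) := by
    rw [← σw_append, List.take_append_drop, P_succ]
  have h3 : σw (fac 0 j) = (P (K+1)).take (Sfun j) := by
    rw [h2, ← h1]
    rw [List.take_append_of_le_length]
    · rw [List.take_of_length_le]
      rw [σw_fac_length]
    · rw [σw_fac_length]
  rw [h3, ← fac_eq_take hSj]

/-- the j-th block of TR -/
lemma block (j : ℕ) : fac (Sfun j) ((σm (TR j)).length) = σm (TR j) := by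
  have h1 : σw (fac 0 (j+1)) = fac 0 (Sfun (j+1)) := seg0 (j+1)
  rw [fac_succ, σw_append] at h1
  rw [seg0 j] at h1
  have h2 : fac 0 (Sfun (j+1)) = fac 0 (Sfun j) ++ fac (Sfun j) ((σm (TR j)).length) := by
    rw [show Sfun (j+1) = Sfun j + (σm (TR j)).length from rfl, fac_add]
    norm_num
  rw [h2] at h1
  have := List.append_cancel_left h1
  rw [← this]
  simp [σw]

/-- general self-similarity -/
lemma seg (j n : ℕ) : σw (fac j n) = fac (Sfun j) (Sfun (j+n) - Sfun j) := by
  induction n with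
  | zero => simp [fac_zero, σw, Sfun]
  | succ n ih =>
      have hmono : Sfun j ≤ Sfun (j+n) := by
        clear ih
        induction n with
        | zero => simp
        | succ n ih2 => rw [← Nat.add_assoc]; 
                        have : Sfun (j+n) ≤ Sfun (j+n+1) := by simp [Sfun]
                        omega
      rw [fac_succ, σw_append, ih, σw_single, ← block (j+n)]
      rw [show j + (n+1) = (j+n) + 1 from rfl,
          show Sfun ((j+n)+1) = Sfun (j+n) + (σm (TR (j+n))).length from rfl]
      have h2 : Sfun (j+n) + (σm (TR (j+n))).length - Sfun j
          = (Sfun (j+n) - Sfun j) + (σm (TR (j+n))).length := by omega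
      rw [h2, fac_add]
      congr 2
      omega


/-! ### counting letters -/

lemma σm_count0 (a : ℕ) : (σm a).count 0 = 1 := by
  match a with
  | 0 => rfl
  | 1 => rfl
  | (n+2) => rfl

lemma σm_count1 (a : ℕ) : (σm a).count 1 = if a = 0 then 1 else 0 := by
  match a with
  | 0 => rfl
  | 1 => rfl
  | (n+2) => simp [σm]

lemma σm_count2 (a : ℕ) : (σm a).count 2 = if a = 1 then 1 else 0 := by
  match a with
  | 0 => rfl
  | 1 => rfl
  | (n+2) => simp [σm]

lemma σw_count0 (l : List ℕ) : (σw l).count 0 = l.length := by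
  induction l with
  | nil => rfl
  | cons a t ih => simp [σw, List.count_append, ih, σm_count0, Nat.add_comm]

lemma σw_count1 (l : List ℕ) : (σw l).count 1 = l.count 0 := by
  induction l with
  | nil => rfl
  | cons a t ih =>
      simp only [σw, List.count_append, ih, σm_count1, List.count_cons]
      rcases eq_or_ne a 0 with h | h <;> simp [h, Nat.add_comm]

lemma σw_count2 (l : List ℕ) : (σw l).count 2 = l.count 1 := by
  induction l with
  | nil => rfl
  | cons a t ih =>
      simp only [σw, List.count_append, ih, σm_count2, List.count_cons]
      rcases eq_or_ne a 1 with h | h <;> simp [h, Nat.add_comm]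

/-- prefix letter counts -/
def Af (x : ℕ) : ℕ := (fac 0 x).count 0
def Bf (x : ℕ) : ℕ := (fac 0 x).count 1
def Cf (x : ℕ) : ℕ := (fac 0 x).count 2

lemma count_le_length (a : ℕ) (l : List ℕ) : l.count a ≤ l.length :=
  List.count_le_length

lemma count_sum (l : List ℕ) (h : ∀ x ∈ l, x ≤ 2) :
    l.count 0 + l.count 1 + l.count 2 = l.length := by
  induction l with
  | nil => rfl
  | cons a t ih =>
      have ha : a ≤ 2 := h a List.mem_cons_self
      have ht := ih fun x hx => h x (List.mem_cons_of_mem _ hx)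
      simp only [List.count_cons, List.length_cons]
      interval_cases a <;> simp <;> omega

lemma fac_mem_le (i n : ℕ) : ∀ x ∈ fac i n, x ≤ 2 := by
  intro x hx
  simp only [fac, List.mem_map] at hx
  obtain ⟨j, _, rfl⟩ := hx
  exact TR_le_two _

lemma abc_sum (x : ℕ) : Af x + Bf x + Cf x = x := by
  have := count_sum (fac 0 x) (fac_mem_le 0 x)
  rwa [fac_length] at this

lemma Sfun_eq (j : ℕ) : Sfun j = j + Af j + Bf j := by
  have h1 := σw_fac_length j
  have h2 : (σw (fac 0 j)).count 0 + (σw (fac 0 j)).count 1 + (σw (fac 0 j)).count 2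
      = (σw (fac 0 j)).length := count_sum _ (fun x hx => σw_mem_le _ x hx)
  rw [σw_count0, σw_count1, σw_count2, fac_length, h1] at h2
  rw [← h2]; rfl

/-! ### decomposition of positions into blocks -/

lemma decomp (x : ℕ) : ∃ u r, r < (σm (TR u)).length ∧ x = Sfun u + r := by
  induction x with
  | zero => exact ⟨0, 0, σm_length_pos _, rfl⟩
  | succ x ih =>
      obtain ⟨u, r, hr, hx⟩ := ih
      rcases Nat.lt_or_ge (r+1) (σm (TR u)).length with h | h
      · exact ⟨u, r+1, h, by omega⟩
      · refine ⟨u+1, 0, σm_length_pos _, ?_⟩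
        have : (σm (TR u)).length = r + 1 := by omega
        rw [show Sfun (u+1) = Sfun u + (σm (TR u)).length from rfl]
        omega

lemma TR_block {u r : ℕ} (hr : r < (σm (TR u)).length) :
    TR (Sfun u + r) = (σm (TR u)).getD r 0 := by
  have h := block u
  rw [← h, fac_getD hr]

lemma TR_Sfun (u : ℕ) : TR (Sfun u) = 0 := by
  have h := TR_block (u := u) (r := 0) (σm_length_pos _)
  rw [Nat.add_zero] at h
  rw [h, σm_head]

lemma σm_getD1_ne {a : ℕ} (h : 1 < (σm a).length) : (σm a).getD 1 0 ≠ 0 := by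
  match a with
  | 0 => simp [σm]
  | 1 => simp [σm]
  | (n+2) => simp [σm] at h

lemma TR_Sfun_one {u : ℕ} (h : 1 < (σm (TR u)).length) : TR (Sfun u + 1) ≠ 0 := by
  rw [TR_block h]
  exact σm_getD1_ne h

lemma σm_len_two {a : ℕ} (ha : a ≤ 2) (h : 1 < (σm a).length) : a ≤ 1 := by
  interval_cases a <;> simp_all [σm]

/-- The letter after a nonzero letter is 0. -/
lemma TR_after_nonzero {k : ℕ} (h : TR k ≠ 0) : TR (k+1) = 0 := by
  obtain ⟨u, r, hr, rfl⟩ := decomp k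
  have hlen := σm_length_le (TR u)
  rcases Nat.eq_or_lt_of_le (Nat.zero_le r) with h0 | h0
  · exfalso; apply h; rw [← h0, Nat.add_zero]; exact TR_Sfun u
  · have hr1 : r = 1 := by omega
    subst hr1
    have : Sfun u + 1 + 1 = Sfun (u+1) := by
      rw [show Sfun (u+1) = Sfun u + (σm (TR u)).length from rfl]; omega
    rw [this]; exact TR_Sfun _

/-- At most ⌈n/2⌉ twos in any factor of length n. -/
lemma count2_bound (i n : ℕ) : 2 * ((fac i n).count 2) ≤ n + 1 := by
  induction n using Nat.strong_induction_on generalizing i with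
  | _ n ih =>
    match n with
    | 0 => simp [fac_zero]
    | 1 => rw [fac_one]; simp [List.count_cons]; split <;> omega
    | (n+2) =>
        have h2 : fac i (n+2) = fac i 2 ++ fac (i+2) n := by
          rw [show n + 2 = 2 + n by omega, fac_add]
        have hfir : (fac i 2).count 2 ≤ 1 := by
          have : fac i 2 = [TR i] ++ [TR (i+1)] := by
            rw [show (2:ℕ) = 1 + 1 from rfl, fac_add, fac_one, fac_one]
          rw [this]
          simp only [List.count_append, List.count_singleton]
          rcases eq_or_ne (TR i) 2 with h | h
          · have : TR (i+1) = 0 := TR_after_nonzero (by omega)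
            simp [h, this]
          · simp [h]
            split <;> omega
        have := ih n (by omega) (i+2)
        rw [h2, List.count_append]
        omega


set_option maxHeartbeats 2000000 in
def RC : List (ℤ × ℤ × ℤ × List ℕ) := [
  (-1, -1, 2, [0, 0, 1, 0, 2, 0, 1, 0, 2, 0, 1, 0, 0, 1, 0, 2, 0, 1, 0, 1]),
  (-1, -1, 2, [0, 1, 0, 2, 0, 1, 0, 2, 0, 1, 0, 0, 1, 0, 2, 0, 1, 0, 1, 0]),
  (-1, -1, 2, [0, 2, 0, 1, 0, 0, 1, 0, 2, 0, 1, 0, 1, 0, 2, 0, 1, 0, 0, 1]),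
  (-1, -1, 2, [0, 2, 0, 1, 0, 1, 0, 2, 0, 1, 0, 0, 1, 0, 2, 0, 1, 0, 0, 1]),
  (-1, -1, 2, [1, 0, 2, 0, 1, 0, 1, 0, 2, 0, 1, 0, 0, 1, 0, 2, 0, 1, 0, 0]),
  (-1, 0, 1, [0, 0, 1, 0, 2, 0, 1, 0, 1, 0, 2, 0, 1, 0, 0, 1, 0, 2, 0, 1]),
  (-1, 0, 1, [0, 0, 1, 0, 2, 0, 1, 0, 2, 0, 1, 0, 0, 1, 0, 2, 0, 1, 0, 1]),
  (-1, 0, 1, [0, 1, 0, 0, 1, 0, 2, 0, 1, 0, 0, 1, 0, 2, 0, 1, 0, 1, 0, 2]),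
  (-1, 0, 1, [0, 1, 0, 0, 1, 0, 2, 0, 1, 0, 1, 0, 2, 0, 1, 0, 0, 1, 0, 2]),
  (-1, 0, 1, [0, 1, 0, 0, 1, 0, 2, 0, 1, 0, 2, 0, 1, 0, 0, 1, 0, 2, 0, 1]),
  (-1, 0, 1, [0, 1, 0, 1, 0, 2, 0, 1, 0, 0, 1, 0, 2, 0, 1, 0, 0, 1, 0, 2]),
  (-1, 0, 1, [0, 1, 0, 1, 0, 2, 0, 1, 0, 0, 1, 0, 2, 0, 1, 0, 1, 0, 2, 0]),
  (-1, 0, 1, [0, 1, 0, 1, 0, 2, 0, 1, 0, 0, 1, 0, 2, 0, 1, 0, 2, 0, 1, 0]),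
  (-1, 0, 1, [0, 1, 0, 2, 0, 1, 0, 0, 1, 0, 2, 0, 1, 0, 0, 1, 0, 2, 0, 1]),
  (-1, 0, 1, [0, 1, 0, 2, 0, 1, 0, 0, 1, 0, 2, 0, 1, 0, 1, 0, 2, 0, 1, 0]),
  (-1, 0, 1, [0, 1, 0, 2, 0, 1, 0, 0, 1, 0, 2, 0, 1, 0, 2, 0, 1, 0, 0, 1]),
  (-1, 0, 1, [0, 1, 0, 2, 0, 1, 0, 1, 0, 2, 0, 1, 0, 0, 1, 0, 2, 0, 1, 0]),
  (-1, 0, 1, [0, 1, 0, 2, 0, 1, 0, 2, 0, 1, 0, 0, 1, 0, 2, 0, 1, 0, 1, 0]),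
  (-1, 0, 1, [0, 2, 0, 1, 0, 0, 1, 0, 2, 0, 1, 0, 0, 1, 0, 2, 0, 1, 0, 1]),
  (-1, 0, 1, [0, 2, 0, 1, 0, 0, 1, 0, 2, 0, 1, 0, 1, 0, 2, 0, 1, 0, 0, 1]),
  (-1, 0, 1, [0, 2, 0, 1, 0, 0, 1, 0, 2, 0, 1, 0, 2, 0, 1, 0, 0, 1, 0, 2]),
  (-1, 0, 1, [0, 2, 0, 1, 0, 1, 0, 2, 0, 1, 0, 0, 1, 0, 2, 0, 1, 0, 0, 1]),
  (-1, 0, 1, [0, 2, 0, 1, 0, 1, 0, 2, 0, 1, 0, 0, 1, 0, 2, 0, 1, 0, 1, 0]),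
  (-1, 0, 1, [0, 2, 0, 1, 0, 1, 0, 2, 0, 1, 0, 0, 1, 0, 2, 0, 1, 0, 2, 0]),
  (-1, 0, 1, [0, 2, 0, 1, 0, 2, 0, 1, 0, 0, 1, 0, 2, 0, 1, 0, 1, 0, 2, 0]),
  (-1, 0, 1, [1, 0, 0, 1, 0, 2, 0, 1, 0, 0, 1, 0, 2, 0, 1, 0, 1, 0, 2, 0]),
  (-1, 0, 1, [1, 0, 0, 1, 0, 2, 0, 1, 0, 1, 0, 2, 0, 1, 0, 0, 1, 0, 2, 0]),
  (-1, 0, 1, [1, 0, 0, 1, 0, 2, 0, 1, 0, 2, 0, 1, 0, 0, 1, 0, 2, 0, 1, 0]),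
  (-1, 0, 1, [1, 0, 2, 0, 1, 0, 1, 0, 2, 0, 1, 0, 0, 1, 0, 2, 0, 1, 0, 0]),
  (-1, 0, 1, [1, 0, 2, 0, 1, 0, 1, 0, 2, 0, 1, 0, 0, 1, 0, 2, 0, 1, 0, 1]),
  (-1, 0, 1, [1, 0, 2, 0, 1, 0, 1, 0, 2, 0, 1, 0, 0, 1, 0, 2, 0, 1, 0, 2]),
  (-1, 0, 1, [1, 0, 2, 0, 1, 0, 2, 0, 1, 0, 0, 1, 0, 2, 0, 1, 0, 1, 0, 2]),
  (-1, 0, 1, [2, 0, 1, 0, 0, 1, 0, 2, 0, 1, 0, 0, 1, 0, 2, 0, 1, 0, 1, 0]),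
  (-1, 0, 1, [2, 0, 1, 0, 0, 1, 0, 2, 0, 1, 0, 1, 0, 2, 0, 1, 0, 0, 1, 0]),
  (-1, 0, 1, [2, 0, 1, 0, 0, 1, 0, 2, 0, 1, 0, 2, 0, 1, 0, 0, 1, 0, 2, 0]),
  (-1, 0, 1, [2, 0, 1, 0, 1, 0, 2, 0, 1, 0, 0, 1, 0, 2, 0, 1, 0, 0, 1, 0]),
  (-1, 0, 1, [2, 0, 1, 0, 1, 0, 2, 0, 1, 0, 0, 1, 0, 2, 0, 1, 0, 1, 0, 2]),
  (-1, 0, 1, [2, 0, 1, 0, 1, 0, 2, 0, 1, 0, 0, 1, 0, 2, 0, 1, 0, 2, 0, 1]),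
  (-1, 1, 0, [0, 0, 1, 0, 2, 0, 1, 0, 1, 0, 2, 0, 1, 0, 0, 1, 0, 2, 0, 1]),
  (-1, 1, 0, [0, 0, 1, 0, 2, 0, 1, 0, 2, 0, 1, 0, 0, 1, 0, 2, 0, 1, 0, 1]),
  (-1, 1, 0, [0, 1, 0, 0, 1, 0, 2, 0, 1, 0, 0, 1, 0, 2, 0, 1, 0, 1, 0, 2]),
  (-1, 1, 0, [0, 1, 0, 0, 1, 0, 2, 0, 1, 0, 1, 0, 2, 0, 1, 0, 0, 1, 0, 2]),
  (-1, 1, 0, [0, 1, 0, 0, 1, 0, 2, 0, 1, 0, 2, 0, 1, 0, 0, 1, 0, 2, 0, 1]),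
  (-1, 1, 0, [0, 1, 0, 1, 0, 2, 0, 1, 0, 0, 1, 0, 2, 0, 1, 0, 0, 1, 0, 2]),
  (-1, 1, 0, [0, 1, 0, 1, 0, 2, 0, 1, 0, 0, 1, 0, 2, 0, 1, 0, 1, 0, 2, 0]),
  (-1, 1, 0, [0, 1, 0, 1, 0, 2, 0, 1, 0, 0, 1, 0, 2, 0, 1, 0, 2, 0, 1, 0]),
  (-1, 1, 0, [0, 1, 0, 2, 0, 1, 0, 0, 1, 0, 2, 0, 1, 0, 0, 1, 0, 2, 0, 1]),
  (-1, 1, 0, [0, 1, 0, 2, 0, 1, 0, 0, 1, 0, 2, 0, 1, 0, 1, 0, 2, 0, 1, 0]),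
  (-1, 1, 0, [0, 1, 0, 2, 0, 1, 0, 0, 1, 0, 2, 0, 1, 0, 2, 0, 1, 0, 0, 1]),
  (-1, 1, 0, [0, 1, 0, 2, 0, 1, 0, 1, 0, 2, 0, 1, 0, 0, 1, 0, 2, 0, 1, 0]),
  (-1, 1, 0, [0, 2, 0, 1, 0, 0, 1, 0, 2, 0, 1, 0, 0, 1, 0, 2, 0, 1, 0, 1]),
  (-1, 1, 0, [0, 2, 0, 1, 0, 0, 1, 0, 2, 0, 1, 0, 1, 0, 2, 0, 1, 0, 0, 1]),
  (-1, 1, 0, [0, 2, 0, 1, 0, 0, 1, 0, 2, 0, 1, 0, 2, 0, 1, 0, 0, 1, 0, 2]),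
  (-1, 1, 0, [0, 2, 0, 1, 0, 1, 0, 2, 0, 1, 0, 0, 1, 0, 2, 0, 1, 0, 0, 1]),
  (-1, 1, 0, [0, 2, 0, 1, 0, 1, 0, 2, 0, 1, 0, 0, 1, 0, 2, 0, 1, 0, 2, 0]),
  (-1, 1, 0, [0, 2, 0, 1, 0, 2, 0, 1, 0, 0, 1, 0, 2, 0, 1, 0, 1, 0, 2, 0]),
  (-1, 1, 0, [1, 0, 0, 1, 0, 2, 0, 1, 0, 0, 1, 0, 2, 0, 1, 0, 1, 0, 2, 0]),
  (-1, 1, 0, [1, 0, 0, 1, 0, 2, 0, 1, 0, 1, 0, 2, 0, 1, 0, 0, 1, 0, 2, 0]),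
  (-1, 1, 0, [1, 0, 0, 1, 0, 2, 0, 1, 0, 2, 0, 1, 0, 0, 1, 0, 2, 0, 1, 0]),
  (-1, 1, 0, [1, 0, 2, 0, 1, 0, 0, 1, 0, 2, 0, 1, 0, 0, 1, 0, 2, 0, 1, 0]),
  (-1, 1, 0, [1, 0, 2, 0, 1, 0, 0, 1, 0, 2, 0, 1, 0, 1, 0, 2, 0, 1, 0, 0]),
  (-1, 1, 0, [1, 0, 2, 0, 1, 0, 0, 1, 0, 2, 0, 1, 0, 2, 0, 1, 0, 0, 1, 0]),
  (-1, 1, 0, [1, 0, 2, 0, 1, 0, 1, 0, 2, 0, 1, 0, 0, 1, 0, 2, 0, 1, 0, 0]),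
  (-1, 1, 0, [1, 0, 2, 0, 1, 0, 1, 0, 2, 0, 1, 0, 0, 1, 0, 2, 0, 1, 0, 1]),
  (-1, 1, 0, [1, 0, 2, 0, 1, 0, 1, 0, 2, 0, 1, 0, 0, 1, 0, 2, 0, 1, 0, 2]),
  (-1, 1, 0, [1, 0, 2, 0, 1, 0, 2, 0, 1, 0, 0, 1, 0, 2, 0, 1, 0, 1, 0, 2]),
  (-1, 1, 0, [2, 0, 1, 0, 1, 0, 2, 0, 1, 0, 0, 1, 0, 2, 0, 1, 0, 0, 1, 0]),
  (-1, 1, 0, [2, 0, 1, 0, 1, 0, 2, 0, 1, 0, 0, 1, 0, 2, 0, 1, 0, 1, 0, 2]),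
  (-1, 1, 0, [2, 0, 1, 0, 1, 0, 2, 0, 1, 0, 0, 1, 0, 2, 0, 1, 0, 2, 0, 1]),
  (-1, 2, -1, [0, 0, 1, 0, 2, 0, 1, 0, 1, 0, 2, 0, 1, 0, 0, 1, 0, 2, 0, 1]),
  (-1, 2, -1, [0, 1, 0, 2, 0, 1, 0, 0, 1, 0, 2, 0, 1, 0, 2, 0, 1, 0, 0, 1]),
  (0, -1, 1, [0, 0, 1, 0, 2, 0, 1, 0, 0, 1, 0, 2, 0, 1, 0, 1, 0, 2, 0, 1]),
  (0, -1, 1, [0, 0, 1, 0, 2, 0, 1, 0, 2, 0, 1, 0, 0, 1, 0, 2, 0, 1, 0, 1]),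
  (0, -1, 1, [0, 1, 0, 0, 1, 0, 2, 0, 1, 0, 0, 1, 0, 2, 0, 1, 0, 1, 0, 2]),
  (0, -1, 1, [0, 1, 0, 0, 1, 0, 2, 0, 1, 0, 1, 0, 2, 0, 1, 0, 0, 1, 0, 2]),
  (0, -1, 1, [0, 1, 0, 0, 1, 0, 2, 0, 1, 0, 2, 0, 1, 0, 0, 1, 0, 2, 0, 1]),
  (0, -1, 1, [0, 1, 0, 1, 0, 2, 0, 1, 0, 0, 1, 0, 2, 0, 1, 0, 0, 1, 0, 2]),
  (0, -1, 1, [0, 1, 0, 1, 0, 2, 0, 1, 0, 0, 1, 0, 2, 0, 1, 0, 1, 0, 2, 0]),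
  (0, -1, 1, [0, 1, 0, 1, 0, 2, 0, 1, 0, 0, 1, 0, 2, 0, 1, 0, 2, 0, 1, 0]),
  (0, -1, 1, [0, 1, 0, 2, 0, 1, 0, 0, 1, 0, 2, 0, 1, 0, 1, 0, 2, 0, 1, 0]),
  (0, -1, 1, [0, 1, 0, 2, 0, 1, 0, 1, 0, 2, 0, 1, 0, 0, 1, 0, 2, 0, 1, 0]),
  (0, -1, 1, [0, 1, 0, 2, 0, 1, 0, 2, 0, 1, 0, 0, 1, 0, 2, 0, 1, 0, 1, 0]),
  (0, -1, 1, [0, 2, 0, 1, 0, 0, 1, 0, 2, 0, 1, 0, 0, 1, 0, 2, 0, 1, 0, 1]),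
  (0, -1, 1, [0, 2, 0, 1, 0, 0, 1, 0, 2, 0, 1, 0, 1, 0, 2, 0, 1, 0, 0, 1]),
  (0, -1, 1, [0, 2, 0, 1, 0, 0, 1, 0, 2, 0, 1, 0, 2, 0, 1, 0, 0, 1, 0, 2]),
  (0, -1, 1, [0, 2, 0, 1, 0, 1, 0, 2, 0, 1, 0, 0, 1, 0, 2, 0, 1, 0, 0, 1]),
  (0, -1, 1, [0, 2, 0, 1, 0, 1, 0, 2, 0, 1, 0, 0, 1, 0, 2, 0, 1, 0, 1, 0]),
  (0, -1, 1, [0, 2, 0, 1, 0, 1, 0, 2, 0, 1, 0, 0, 1, 0, 2, 0, 1, 0, 2, 0]),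
  (0, -1, 1, [0, 2, 0, 1, 0, 2, 0, 1, 0, 0, 1, 0, 2, 0, 1, 0, 1, 0, 2, 0]),
  (0, -1, 1, [1, 0, 0, 1, 0, 2, 0, 1, 0, 0, 1, 0, 2, 0, 1, 0, 1, 0, 2, 0]),
  (0, -1, 1, [1, 0, 0, 1, 0, 2, 0, 1, 0, 1, 0, 2, 0, 1, 0, 0, 1, 0, 2, 0]),
  (0, -1, 1, [1, 0, 0, 1, 0, 2, 0, 1, 0, 2, 0, 1, 0, 0, 1, 0, 2, 0, 1, 0]),
  (0, -1, 1, [1, 0, 1, 0, 2, 0, 1, 0, 0, 1, 0, 2, 0, 1, 0, 0, 1, 0, 2, 0]),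
  (0, -1, 1, [1, 0, 1, 0, 2, 0, 1, 0, 0, 1, 0, 2, 0, 1, 0, 1, 0, 2, 0, 1]),
  (0, -1, 1, [1, 0, 1, 0, 2, 0, 1, 0, 0, 1, 0, 2, 0, 1, 0, 2, 0, 1, 0, 0]),
  (0, -1, 1, [1, 0, 2, 0, 1, 0, 0, 1, 0, 2, 0, 1, 0, 1, 0, 2, 0, 1, 0, 0]),
  (0, -1, 1, [1, 0, 2, 0, 1, 0, 1, 0, 2, 0, 1, 0, 0, 1, 0, 2, 0, 1, 0, 0]),
  (0, -1, 1, [1, 0, 2, 0, 1, 0, 1, 0, 2, 0, 1, 0, 0, 1, 0, 2, 0, 1, 0, 1]),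
  (0, -1, 1, [1, 0, 2, 0, 1, 0, 1, 0, 2, 0, 1, 0, 0, 1, 0, 2, 0, 1, 0, 2]),
  (0, -1, 1, [1, 0, 2, 0, 1, 0, 2, 0, 1, 0, 0, 1, 0, 2, 0, 1, 0, 1, 0, 2]),
  (0, -1, 1, [2, 0, 1, 0, 0, 1, 0, 2, 0, 1, 0, 0, 1, 0, 2, 0, 1, 0, 1, 0]),
  (0, -1, 1, [2, 0, 1, 0, 0, 1, 0, 2, 0, 1, 0, 1, 0, 2, 0, 1, 0, 0, 1, 0]),
  (0, -1, 1, [2, 0, 1, 0, 0, 1, 0, 2, 0, 1, 0, 2, 0, 1, 0, 0, 1, 0, 2, 0]),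
  (0, -1, 1, [2, 0, 1, 0, 1, 0, 2, 0, 1, 0, 0, 1, 0, 2, 0, 1, 0, 0, 1, 0]),
  (0, -1, 1, [2, 0, 1, 0, 1, 0, 2, 0, 1, 0, 0, 1, 0, 2, 0, 1, 0, 1, 0, 2]),
  (0, -1, 1, [2, 0, 1, 0, 1, 0, 2, 0, 1, 0, 0, 1, 0, 2, 0, 1, 0, 2, 0, 1]),
  (0, -1, 1, [2, 0, 1, 0, 2, 0, 1, 0, 0, 1, 0, 2, 0, 1, 0, 1, 0, 2, 0, 1]),
  (0, 0, 0, [0, 0, 1, 0, 2, 0, 1, 0, 0, 1, 0, 2, 0, 1, 0, 1, 0, 2, 0, 1]),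
  (0, 0, 0, [0, 0, 1, 0, 2, 0, 1, 0, 1, 0, 2, 0, 1, 0, 0, 1, 0, 2, 0, 1]),
  (0, 0, 0, [0, 0, 1, 0, 2, 0, 1, 0, 2, 0, 1, 0, 0, 1, 0, 2, 0, 1, 0, 1]),
  (0, 0, 0, [0, 1, 0, 0, 1, 0, 2, 0, 1, 0, 0, 1, 0, 2, 0, 1, 0, 1, 0, 2]),
  (0, 0, 0, [0, 1, 0, 0, 1, 0, 2, 0, 1, 0, 1, 0, 2, 0, 1, 0, 0, 1, 0, 2]),
  (0, 0, 0, [0, 1, 0, 0, 1, 0, 2, 0, 1, 0, 2, 0, 1, 0, 0, 1, 0, 2, 0, 1]),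
  (0, 0, 0, [0, 1, 0, 1, 0, 2, 0, 1, 0, 0, 1, 0, 2, 0, 1, 0, 0, 1, 0, 2]),
  (0, 0, 0, [0, 1, 0, 1, 0, 2, 0, 1, 0, 0, 1, 0, 2, 0, 1, 0, 1, 0, 2, 0]),
  (0, 0, 0, [0, 1, 0, 1, 0, 2, 0, 1, 0, 0, 1, 0, 2, 0, 1, 0, 2, 0, 1, 0]),
  (0, 0, 0, [0, 1, 0, 2, 0, 1, 0, 0, 1, 0, 2, 0, 1, 0, 0, 1, 0, 2, 0, 1]),
  (0, 0, 0, [0, 1, 0, 2, 0, 1, 0, 0, 1, 0, 2, 0, 1, 0, 1, 0, 2, 0, 1, 0]),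
  (0, 0, 0, [0, 1, 0, 2, 0, 1, 0, 0, 1, 0, 2, 0, 1, 0, 2, 0, 1, 0, 0, 1]),
  (0, 0, 0, [0, 1, 0, 2, 0, 1, 0, 1, 0, 2, 0, 1, 0, 0, 1, 0, 2, 0, 1, 0]),
  (0, 0, 0, [0, 1, 0, 2, 0, 1, 0, 2, 0, 1, 0, 0, 1, 0, 2, 0, 1, 0, 1, 0]),
  (0, 0, 0, [0, 2, 0, 1, 0, 0, 1, 0, 2, 0, 1, 0, 0, 1, 0, 2, 0, 1, 0, 1]),
  (0, 0, 0, [0, 2, 0, 1, 0, 0, 1, 0, 2, 0, 1, 0, 1, 0, 2, 0, 1, 0, 0, 1]),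
  (0, 0, 0, [0, 2, 0, 1, 0, 0, 1, 0, 2, 0, 1, 0, 2, 0, 1, 0, 0, 1, 0, 2]),
  (0, 0, 0, [0, 2, 0, 1, 0, 1, 0, 2, 0, 1, 0, 0, 1, 0, 2, 0, 1, 0, 0, 1]),
  (0, 0, 0, [0, 2, 0, 1, 0, 1, 0, 2, 0, 1, 0, 0, 1, 0, 2, 0, 1, 0, 1, 0]),
  (0, 0, 0, [0, 2, 0, 1, 0, 1, 0, 2, 0, 1, 0, 0, 1, 0, 2, 0, 1, 0, 2, 0]),
  (0, 0, 0, [0, 2, 0, 1, 0, 2, 0, 1, 0, 0, 1, 0, 2, 0, 1, 0, 1, 0, 2, 0]),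
  (0, 0, 0, [1, 0, 0, 1, 0, 2, 0, 1, 0, 0, 1, 0, 2, 0, 1, 0, 1, 0, 2, 0]),
  (0, 0, 0, [1, 0, 0, 1, 0, 2, 0, 1, 0, 1, 0, 2, 0, 1, 0, 0, 1, 0, 2, 0]),
  (0, 0, 0, [1, 0, 0, 1, 0, 2, 0, 1, 0, 2, 0, 1, 0, 0, 1, 0, 2, 0, 1, 0]),
  (0, 0, 0, [1, 0, 1, 0, 2, 0, 1, 0, 0, 1, 0, 2, 0, 1, 0, 0, 1, 0, 2, 0]),
  (0, 0, 0, [1, 0, 1, 0, 2, 0, 1, 0, 0, 1, 0, 2, 0, 1, 0, 1, 0, 2, 0, 1]),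
  (0, 0, 0, [1, 0, 1, 0, 2, 0, 1, 0, 0, 1, 0, 2, 0, 1, 0, 2, 0, 1, 0, 0]),
  (0, 0, 0, [1, 0, 2, 0, 1, 0, 0, 1, 0, 2, 0, 1, 0, 0, 1, 0, 2, 0, 1, 0]),
  (0, 0, 0, [1, 0, 2, 0, 1, 0, 0, 1, 0, 2, 0, 1, 0, 1, 0, 2, 0, 1, 0, 0]),
  (0, 0, 0, [1, 0, 2, 0, 1, 0, 0, 1, 0, 2, 0, 1, 0, 2, 0, 1, 0, 0, 1, 0]),
  (0, 0, 0, [1, 0, 2, 0, 1, 0, 1, 0, 2, 0, 1, 0, 0, 1, 0, 2, 0, 1, 0, 0]),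
  (0, 0, 0, [1, 0, 2, 0, 1, 0, 1, 0, 2, 0, 1, 0, 0, 1, 0, 2, 0, 1, 0, 1]),
  (0, 0, 0, [1, 0, 2, 0, 1, 0, 1, 0, 2, 0, 1, 0, 0, 1, 0, 2, 0, 1, 0, 2]),
  (0, 0, 0, [1, 0, 2, 0, 1, 0, 2, 0, 1, 0, 0, 1, 0, 2, 0, 1, 0, 1, 0, 2]),
  (0, 0, 0, [2, 0, 1, 0, 0, 1, 0, 2, 0, 1, 0, 0, 1, 0, 2, 0, 1, 0, 1, 0]),
  (0, 0, 0, [2, 0, 1, 0, 0, 1, 0, 2, 0, 1, 0, 1, 0, 2, 0, 1, 0, 0, 1, 0]),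
  (0, 0, 0, [2, 0, 1, 0, 0, 1, 0, 2, 0, 1, 0, 2, 0, 1, 0, 0, 1, 0, 2, 0]),
  (0, 0, 0, [2, 0, 1, 0, 1, 0, 2, 0, 1, 0, 0, 1, 0, 2, 0, 1, 0, 0, 1, 0]),
  (0, 0, 0, [2, 0, 1, 0, 1, 0, 2, 0, 1, 0, 0, 1, 0, 2, 0, 1, 0, 1, 0, 2]),
  (0, 0, 0, [2, 0, 1, 0, 1, 0, 2, 0, 1, 0, 0, 1, 0, 2, 0, 1, 0, 2, 0, 1]),
  (0, 0, 0, [2, 0, 1, 0, 2, 0, 1, 0, 0, 1, 0, 2, 0, 1, 0, 1, 0, 2, 0, 1]),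
  (0, 1, -1, [0, 0, 1, 0, 2, 0, 1, 0, 0, 1, 0, 2, 0, 1, 0, 1, 0, 2, 0, 1]),
  (0, 1, -1, [0, 0, 1, 0, 2, 0, 1, 0, 1, 0, 2, 0, 1, 0, 0, 1, 0, 2, 0, 1]),
  (0, 1, -1, [0, 1, 0, 0, 1, 0, 2, 0, 1, 0, 0, 1, 0, 2, 0, 1, 0, 1, 0, 2]),
  (0, 1, -1, [0, 1, 0, 0, 1, 0, 2, 0, 1, 0, 1, 0, 2, 0, 1, 0, 0, 1, 0, 2]),
  (0, 1, -1, [0, 1, 0, 0, 1, 0, 2, 0, 1, 0, 2, 0, 1, 0, 0, 1, 0, 2, 0, 1]),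
  (0, 1, -1, [0, 1, 0, 1, 0, 2, 0, 1, 0, 0, 1, 0, 2, 0, 1, 0, 0, 1, 0, 2]),
  (0, 1, -1, [0, 1, 0, 1, 0, 2, 0, 1, 0, 0, 1, 0, 2, 0, 1, 0, 1, 0, 2, 0]),
  (0, 1, -1, [0, 1, 0, 1, 0, 2, 0, 1, 0, 0, 1, 0, 2, 0, 1, 0, 2, 0, 1, 0]),
  (0, 1, -1, [0, 1, 0, 2, 0, 1, 0, 0, 1, 0, 2, 0, 1, 0, 0, 1, 0, 2, 0, 1]),
  (0, 1, -1, [0, 1, 0, 2, 0, 1, 0, 0, 1, 0, 2, 0, 1, 0, 1, 0, 2, 0, 1, 0]),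
  (0, 1, -1, [0, 1, 0, 2, 0, 1, 0, 0, 1, 0, 2, 0, 1, 0, 2, 0, 1, 0, 0, 1]),
  (0, 1, -1, [0, 1, 0, 2, 0, 1, 0, 1, 0, 2, 0, 1, 0, 0, 1, 0, 2, 0, 1, 0]),
  (0, 1, -1, [1, 0, 0, 1, 0, 2, 0, 1, 0, 0, 1, 0, 2, 0, 1, 0, 1, 0, 2, 0]),
  (0, 1, -1, [1, 0, 0, 1, 0, 2, 0, 1, 0, 1, 0, 2, 0, 1, 0, 0, 1, 0, 2, 0]),
  (0, 1, -1, [1, 0, 0, 1, 0, 2, 0, 1, 0, 2, 0, 1, 0, 0, 1, 0, 2, 0, 1, 0]),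
  (0, 1, -1, [1, 0, 1, 0, 2, 0, 1, 0, 0, 1, 0, 2, 0, 1, 0, 0, 1, 0, 2, 0]),
  (0, 1, -1, [1, 0, 1, 0, 2, 0, 1, 0, 0, 1, 0, 2, 0, 1, 0, 1, 0, 2, 0, 1]),
  (0, 1, -1, [1, 0, 1, 0, 2, 0, 1, 0, 0, 1, 0, 2, 0, 1, 0, 2, 0, 1, 0, 0]),
  (0, 1, -1, [1, 0, 2, 0, 1, 0, 0, 1, 0, 2, 0, 1, 0, 0, 1, 0, 2, 0, 1, 0]),
  (0, 1, -1, [1, 0, 2, 0, 1, 0, 0, 1, 0, 2, 0, 1, 0, 1, 0, 2, 0, 1, 0, 0]),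
  (0, 1, -1, [1, 0, 2, 0, 1, 0, 0, 1, 0, 2, 0, 1, 0, 2, 0, 1, 0, 0, 1, 0]),
  (0, 1, -1, [2, 0, 1, 0, 1, 0, 2, 0, 1, 0, 0, 1, 0, 2, 0, 1, 0, 0, 1, 0]),
  (0, 1, -1, [2, 0, 1, 0, 1, 0, 2, 0, 1, 0, 0, 1, 0, 2, 0, 1, 0, 1, 0, 2]),
  (0, 1, -1, [2, 0, 1, 0, 1, 0, 2, 0, 1, 0, 0, 1, 0, 2, 0, 1, 0, 2, 0, 1]),
  (1, -1, 0, [0, 0, 1, 0, 2, 0, 1, 0, 0, 1, 0, 2, 0, 1, 0, 1, 0, 2, 0, 1]),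
  (1, -1, 0, [0, 1, 0, 2, 0, 1, 0, 2, 0, 1, 0, 0, 1, 0, 2, 0, 1, 0, 1, 0]),
  (1, -1, 0, [0, 2, 0, 1, 0, 0, 1, 0, 2, 0, 1, 0, 1, 0, 2, 0, 1, 0, 0, 1]),
  (1, -1, 0, [0, 2, 0, 1, 0, 1, 0, 2, 0, 1, 0, 0, 1, 0, 2, 0, 1, 0, 0, 1]),
  (1, -1, 0, [0, 2, 0, 1, 0, 1, 0, 2, 0, 1, 0, 0, 1, 0, 2, 0, 1, 0, 1, 0]),
  (1, -1, 0, [0, 2, 0, 1, 0, 1, 0, 2, 0, 1, 0, 0, 1, 0, 2, 0, 1, 0, 2, 0]),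
  (1, -1, 0, [0, 2, 0, 1, 0, 2, 0, 1, 0, 0, 1, 0, 2, 0, 1, 0, 1, 0, 2, 0]),
  (1, -1, 0, [1, 0, 0, 1, 0, 2, 0, 1, 0, 0, 1, 0, 2, 0, 1, 0, 1, 0, 2, 0]),
  (1, -1, 0, [1, 0, 0, 1, 0, 2, 0, 1, 0, 1, 0, 2, 0, 1, 0, 0, 1, 0, 2, 0]),
  (1, -1, 0, [1, 0, 0, 1, 0, 2, 0, 1, 0, 2, 0, 1, 0, 0, 1, 0, 2, 0, 1, 0]),
  (1, -1, 0, [1, 0, 1, 0, 2, 0, 1, 0, 0, 1, 0, 2, 0, 1, 0, 0, 1, 0, 2, 0]),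
  (1, -1, 0, [1, 0, 1, 0, 2, 0, 1, 0, 0, 1, 0, 2, 0, 1, 0, 1, 0, 2, 0, 1]),
  (1, -1, 0, [1, 0, 1, 0, 2, 0, 1, 0, 0, 1, 0, 2, 0, 1, 0, 2, 0, 1, 0, 0]),
  (1, -1, 0, [1, 0, 2, 0, 1, 0, 0, 1, 0, 2, 0, 1, 0, 0, 1, 0, 2, 0, 1, 0]),
  (1, -1, 0, [1, 0, 2, 0, 1, 0, 0, 1, 0, 2, 0, 1, 0, 1, 0, 2, 0, 1, 0, 0]),
  (1, -1, 0, [1, 0, 2, 0, 1, 0, 0, 1, 0, 2, 0, 1, 0, 2, 0, 1, 0, 0, 1, 0]),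
  (1, -1, 0, [2, 0, 1, 0, 0, 1, 0, 2, 0, 1, 0, 0, 1, 0, 2, 0, 1, 0, 1, 0]),
  (1, -1, 0, [2, 0, 1, 0, 0, 1, 0, 2, 0, 1, 0, 1, 0, 2, 0, 1, 0, 0, 1, 0]),
  (1, -1, 0, [2, 0, 1, 0, 0, 1, 0, 2, 0, 1, 0, 2, 0, 1, 0, 0, 1, 0, 2, 0]),
  (1, -1, 0, [2, 0, 1, 0, 2, 0, 1, 0, 0, 1, 0, 2, 0, 1, 0, 1, 0, 2, 0, 1]),
  (1, 0, -1, [0, 0, 1, 0, 2, 0, 1, 0, 0, 1, 0, 2, 0, 1, 0, 1, 0, 2, 0, 1]),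
  (1, 0, -1, [0, 1, 0, 1, 0, 2, 0, 1, 0, 0, 1, 0, 2, 0, 1, 0, 2, 0, 1, 0]),
  (1, 0, -1, [0, 1, 0, 2, 0, 1, 0, 0, 1, 0, 2, 0, 1, 0, 1, 0, 2, 0, 1, 0]),
  (1, 0, -1, [0, 1, 0, 2, 0, 1, 0, 0, 1, 0, 2, 0, 1, 0, 2, 0, 1, 0, 0, 1]),
  (1, 0, -1, [0, 1, 0, 2, 0, 1, 0, 1, 0, 2, 0, 1, 0, 0, 1, 0, 2, 0, 1, 0]),
  (1, 0, -1, [0, 2, 0, 1, 0, 1, 0, 2, 0, 1, 0, 0, 1, 0, 2, 0, 1, 0, 2, 0]),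
  (1, 0, -1, [0, 2, 0, 1, 0, 2, 0, 1, 0, 0, 1, 0, 2, 0, 1, 0, 1, 0, 2, 0]),
  (1, 0, -1, [1, 0, 0, 1, 0, 2, 0, 1, 0, 0, 1, 0, 2, 0, 1, 0, 1, 0, 2, 0]),
  (1, 0, -1, [1, 0, 0, 1, 0, 2, 0, 1, 0, 1, 0, 2, 0, 1, 0, 0, 1, 0, 2, 0]),
  (1, 0, -1, [1, 0, 0, 1, 0, 2, 0, 1, 0, 2, 0, 1, 0, 0, 1, 0, 2, 0, 1, 0]),
  (1, 0, -1, [1, 0, 1, 0, 2, 0, 1, 0, 0, 1, 0, 2, 0, 1, 0, 0, 1, 0, 2, 0]),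
  (1, 0, -1, [1, 0, 1, 0, 2, 0, 1, 0, 0, 1, 0, 2, 0, 1, 0, 1, 0, 2, 0, 1]),
  (1, 0, -1, [1, 0, 1, 0, 2, 0, 1, 0, 0, 1, 0, 2, 0, 1, 0, 2, 0, 1, 0, 0]),
  (1, 0, -1, [1, 0, 2, 0, 1, 0, 0, 1, 0, 2, 0, 1, 0, 0, 1, 0, 2, 0, 1, 0]),
  (1, 0, -1, [1, 0, 2, 0, 1, 0, 0, 1, 0, 2, 0, 1, 0, 1, 0, 2, 0, 1, 0, 0]),
  (1, 0, -1, [1, 0, 2, 0, 1, 0, 0, 1, 0, 2, 0, 1, 0, 2, 0, 1, 0, 0, 1, 0]),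
  (1, 0, -1, [2, 0, 1, 0, 0, 1, 0, 2, 0, 1, 0, 0, 1, 0, 2, 0, 1, 0, 1, 0]),
  (1, 0, -1, [2, 0, 1, 0, 0, 1, 0, 2, 0, 1, 0, 1, 0, 2, 0, 1, 0, 0, 1, 0]),
  (1, 0, -1, [2, 0, 1, 0, 0, 1, 0, 2, 0, 1, 0, 2, 0, 1, 0, 0, 1, 0, 2, 0]),
  (1, 0, -1, [2, 0, 1, 0, 2, 0, 1, 0, 0, 1, 0, 2, 0, 1, 0, 1, 0, 2, 0, 1])
]

def winc (a : ℕ) (W : List ℕ) (eN : ℕ) : ℤ :=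
  if eN = 0 then -(((W.drop 8).take 1).count a : ℤ) else (((W.drop 9).take (eN - 1)).count a : ℤ)

def wat (W : List ℕ) (eN : ℕ) : ℕ := W.getD (8 + eN) 0

def pw (W : List ℕ) (eN dq : ℕ) : List ℕ :=
  ((σw ((W.drop (eN+2)).take 14)).drop ((σw ((W.drop (eN+2)).take 6)).length + dq - 9)).take 20

set_option maxHeartbeats 2000000 in
lemma RC_bounds : ∀ s ∈ RC, (-1 ≤ s.1 ∧ s.1 ≤ 1) ∧ (-1 ≤ s.2.2.1 ∧ s.2.2.1 ≤ 2) := by decide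

set_option maxHeartbeats 2000000 in
lemma RC_step : ∀ s ∈ RC, ∀ dx ∈ List.range 2, ∀ dy ∈ List.range 2, ∀ dq ∈ List.range 2, ∀ eN ∈ List.range 5,
    (2 * ((eN:ℤ) - 1) + dq - winc 2 s.2.2.2 eN = dx + dy + s.2.2.1) →
    (dq = 1 → wat s.2.2.2 eN ≤ 1) →
    (((eN:ℤ) - 1 + dq - dx - dy, s.1 + winc 0 s.2.2.2 eN, s.2.1 + winc 1 s.2.2.2 eN,
      pw s.2.2.2 eN dq) ∈ RC) := by decide


/-! ### the abstract quantities of the induction -/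

def GaZ (x y : ℕ) : ℤ := (Af (x+y) : ℤ) - Af x - Af y
def GbZ (x y : ℕ) : ℤ := (Bf (x+y) : ℤ) - Bf x - Bf y
def GcZ (x y : ℕ) : ℤ := (Cf (x+y) : ℤ) - Cf x - Cf y
def Wl (q : ℕ) : List ℕ := fac (q - 9) 20
def stV (x y : ℕ) : ℤ × ℤ × ℤ × List ℕ := (GaZ x y, GbZ x y, GcZ x y, Wl (x+y))
def Pred (x y : ℕ) : Prop := (9 ≤ x + y → stV x y ∈ RC) ∧ (GaZ x y).natAbs ≤ 1

/-! ### counting at decomposed positions -/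

lemma count_fac_r {u r : ℕ} (hr : r < (σm (TR u)).length) (a : ℕ) :
    (fac (Sfun u) r).count a = if a = 0 then r else 0 := by
  have h2 := σm_length_le (TR u)
  have h3 : r ≤ 1 := by omega
  interval_cases r
  · simp [fac_zero]
  · rw [fac_one, TR_Sfun]
    rcases eq_or_ne a 0 with h | h <;> simp [h, List.count_cons] <;> omega

lemma Af_decomp {u r : ℕ} (hr : r < (σm (TR u)).length) : Af (Sfun u + r) = u + r := by
  unfold Af
  rw [fac_add, List.count_append, ← seg0, σw_count0, fac_length, Nat.zero_add,
      count_fac_r hr]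
  simp

lemma Bf_decomp {u r : ℕ} (hr : r < (σm (TR u)).length) : Bf (Sfun u + r) = Af u := by
  unfold Bf
  rw [fac_add, List.count_append, ← seg0, σw_count1, Nat.zero_add, count_fac_r hr]
  simp [Af]

lemma Cf_decomp {u r : ℕ} (hr : r < (σm (TR u)).length) : Cf (Sfun u + r) = Bf u := by
  unfold Cf
  rw [fac_add, List.count_append, ← seg0, σw_count2, Nat.zero_add, count_fac_r hr]
  simp [Bf]

lemma Sfun_Cf (u : ℕ) : Sfun u + Cf u = 2 * u := by
  have h1 := Sfun_eq u
  have h2 := abc_sum u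
  omega

lemma Af_add (a b : ℕ) : Af (a+b) = Af a + (fac a b).count 0 := by
  unfold Af
  rw [fac_add, List.count_append, Nat.zero_add]

lemma Bf_add (a b : ℕ) : Bf (a+b) = Bf a + (fac a b).count 1 := by
  unfold Bf
  rw [fac_add, List.count_append, Nat.zero_add]

lemma Cf_add (a b : ℕ) : Cf (a+b) = Cf a + (fac a b).count 2 := by
  unfold Cf
  rw [fac_add, List.count_append, Nat.zero_add]

lemma Cf_le (u : ℕ) : Cf u ≤ u := by
  have := count_le_length 2 (fac 0 u)
  rwa [fac_length] at this

lemma TR_zero : TR 0 = 0 := by decide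

lemma Af_pos {u : ℕ} (h : 1 ≤ u) : 1 ≤ Af u := by
  have h1 : Af u = Af 1 + (fac 1 (u-1)).count 0 := by
    have := Af_add 1 (u-1)
    rwa [show 1 + (u-1) = u by omega] at this
  have h2 : Af 1 = 1 := by rw [Af, fac_one, TR_zero]; rfl
  omega

/-! ### window slicing -/

lemma fac_take {i n k : ℕ} (h : k ≤ n) : (fac i n).take k = fac i k := by
  conv_lhs => rw [show n = k + (n - k) by omega, fac_add]
  rw [List.take_append_of_le_length (by rw [fac_length])]
  exact List.take_of_length_le (by rw [fac_length])

lemma fac_drop {i n k : ℕ} (h : k ≤ n) : (fac i n).drop k = fac (i+k) (n-k) := by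
  conv_lhs => rw [show n = k + (n - k) by omega, fac_add]
  have := @List.drop_left _ (fac i k) (fac (i+k) (n-k))
  rwa [fac_length] at this

lemma σw_fac_len (j n : ℕ) : (σw (fac j n)).length = Sfun (j+n) - Sfun j := by
  rw [seg, fac_length]

lemma Sfun_le_add (j n : ℕ) : Sfun j ≤ Sfun (j+n) := by
  induction n with
  | zero => simp
  | succ n ih =>
      have h2 : Sfun (j+n) ≤ Sfun ((j+n)+1) := by simp [Sfun]
      have h3 : j + (n+1) = (j+n)+1 := by omega
      rw [h3]; omega

lemma Sfun_gap2 (j : ℕ) : Sfun j + 3 ≤ Sfun (j+2) := by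
  have h1 : 3 ≤ (σm (TR j)).length + (σm (TR (j+1))).length := by
    rcases eq_or_ne (TR j) 0 with h | h
    · have e : (σm (TR j)).length = 2 := by rw [h]; rfl
      have := σm_length_pos (TR (j+1))
      omega
    · rcases eq_or_ne (TR j) 1 with h' | h'
      · have e : (σm (TR j)).length = 2 := by rw [h']; rfl
        have := σm_length_pos (TR (j+1))
        omega
      · have h0 : TR (j+1) = 0 := TR_after_nonzero h
        have e : (σm (TR (j+1))).length = 2 := by rw [h0]; rfl
        have := σm_length_pos (TR j)
        omega
  have e1 : Sfun (j+2) = Sfun j + (σm (TR j)).length + (σm (TR (j+1))).length := by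
    rw [show j+2 = (j+1)+1 from rfl,
        show Sfun ((j+1)+1) = Sfun (j+1) + (σm (TR (j+1))).length from rfl,
        show Sfun (j+1) = Sfun j + (σm (TR j)).length from rfl]
  omega

lemma Sfun_gap6 (j : ℕ) : Sfun j + 9 ≤ Sfun (j+6) := by
  have h1 := Sfun_gap2 j
  have h2 := Sfun_gap2 (j+2)
  have h3 := Sfun_gap2 (j+4)
  have e1 : j + 2 + 2 = j + 4 := by omega
  have e2 : j + 4 + 2 = j + 6 := by omega
  rw [e1] at h2; rw [e2] at h3
  omega

lemma Sfun_gap8 (j : ℕ) : Sfun j + 12 ≤ Sfun (j+8) := by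
  have h1 := Sfun_gap6 j
  have h2 := Sfun_gap2 (j+6)
  have e : j + 6 + 2 = j + 8 := by omega
  rw [e] at h2
  omega

/-! ### occ as list count -/

lemma occ_eq_count (a i n : ℕ) : occ a i n = (fac i n).count a := by
  induction n with
  | zero => simp [occ, fac_zero]
  | succ n ih =>
      have h1 : occ a i (n+1) = occ a i n + if TR (i+n) = a then 1 else 0 := by
        rw [occ, occ, Finset.range_add_one, Finset.filter_insert]
        split
        · rw [Finset.card_insert_of_notMem (by simp)]
        · rfl
      have h2 : (fac i (n+1)).count a
          = (fac i n).count a + if TR (i+n) = a then 1 else 0 := by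
        rw [fac_succ, List.count_append]
        congr 1
        simp [List.count_cons]
      omega

/-! ### the base case -/

lemma base_case : ∀ n ∈ List.range 19, ∀ x ∈ List.range (n+1),
    (9 ≤ n → stV x (n - x) ∈ RC) ∧ (GaZ x (n - x)).natAbs ≤ 1 := by decide

/-! ### the inductive step -/

lemma step_case {x y u v w dx dy dq : ℕ}
    (hdx : dx < (σm (TR u)).length) (hx : x = Sfun u + dx)
    (hdy : dy < (σm (TR v)).length) (hy : y = Sfun v + dy)
    (hdq : dq < (σm (TR w)).length) (hq : x + y = Sfun w + dq)
    (hbig : 9 ≤ u + v) (hmem : stV u v ∈ RC) : Pred x y := by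
  have hdx1 : dx ≤ 1 := by have := σm_length_le (TR u); omega
  have hdy1 : dy ≤ 1 := by have := σm_length_le (TR v); omega
  have hdq1 : dq ≤ 1 := by have := σm_length_le (TR w); omega
  -- counting facts at x, y, x+y
  have hAx : Af x = u + dx := by rw [hx]; exact Af_decomp hdx
  have hBx : Bf x = Af u := by rw [hx]; exact Bf_decomp hdx
  have hCx : Cf x = Bf u := by rw [hx]; exact Cf_decomp hdx
  have hAy : Af y = v + dy := by rw [hy]; exact Af_decomp hdy
  have hBy : Bf y = Af v := by rw [hy]; exact Bf_decomp hdy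
  have hCy : Cf y = Bf v := by rw [hy]; exact Cf_decomp hdy
  have hAq : Af (x+y) = w + dq := by rw [hq]; exact Af_decomp hdq
  have hBq : Bf (x+y) = Af w := by rw [hq]; exact Bf_decomp hdq
  have hCq : Cf (x+y) = Bf w := by rw [hq]; exact Cf_decomp hdq
  -- length equations
  have hNu : x + Cf u = 2*u + dx := by have := Sfun_Cf u; omega
  have hNv : y + Cf v = 2*v + dy := by have := Sfun_Cf v; omega
  have hNw : (x+y) + Cf w = 2*w + dq := by have := Sfun_Cf w; omega
  -- Gc bounds from membership
  have hGc1 : (-1:ℤ) ≤ GcZ u v := (RC_bounds _ hmem).2.1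
  have hGc2 : GcZ u v ≤ 2 := (RC_bounds _ hmem).2.2
  have hGcdef : GcZ u v = (Cf (u+v) : ℤ) - Cf u - Cf v := rfl
  have hGadef : GaZ u v = (Af (u+v) : ℤ) - Af u - Af v := rfl
  have hGbdef : GbZ u v = (Bf (u+v) : ℤ) - Bf u - Bf v := rfl
  -- the scale shift eN
  have hEx : ∃ eN : ℕ, eN < 5 ∧ w + 1 = (u+v) + eN := by
    rcases Nat.lt_or_ge w (u+v) with hlt | hge
    · have hCadd : Cf (u+v) = Cf w + (fac w (u+v-w)).count 2 := by
        have := Cf_add w (u+v-w)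
        rwa [show w + (u+v-w) = u+v by omega] at this
      have hcb := count2_bound w (u+v-w)
      refine ⟨0, by omega, ?_⟩
      omega
    · have hCadd : Cf w = Cf (u+v) + (fac (u+v) (w-(u+v))).count 2 := by
        have := Cf_add (u+v) (w-(u+v))
        rwa [show (u+v) + (w-(u+v)) = w by omega] at this
      have hcb := count2_bound (u+v) (w-(u+v))
      exact ⟨w - (u+v) + 1, by omega, by omega⟩
  obtain ⟨eN, heN5, heNw⟩ := hEx
  -- window pieces
  have hdrop9 : (Wl (u+v)).drop 9 = fac (u+v) 11 := by
    rw [Wl, fac_drop (by omega)]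
    congr 1
    omega
  have hdrop8 : (Wl (u+v)).drop 8 = fac (u+v-1) 12 := by
    rw [Wl, fac_drop (by omega)]
    congr 1
    omega
  -- winc equalities
  have hw0 : winc 0 (Wl (u+v)) eN = (Af w : ℤ) - Af (u+v) := by
    rcases Nat.eq_zero_or_pos eN with he0 | hepos
    · have hwv : w + 1 = u + v := by omega
      have hAadd : Af (u+v) = Af w + (fac w 1).count 0 := by
        have := Af_add w 1; rwa [hwv] at this
      rw [winc, if_pos he0, hdrop8, fac_take (by omega),
          show u+v-1 = w by omega]
      omega
    · have hwv : w = (u+v) + (eN - 1) := by omega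
      have hAadd : Af w = Af (u+v) + (fac (u+v) (eN-1)).count 0 := by
        rw [hwv]; exact Af_add (u+v) (eN-1)
      rw [winc, if_neg (by omega), hdrop9, fac_take (by omega)]
      omega
  have hw1 : winc 1 (Wl (u+v)) eN = (Bf w : ℤ) - Bf (u+v) := by
    rcases Nat.eq_zero_or_pos eN with he0 | hepos
    · have hwv : w + 1 = u + v := by omega
      have hAadd : Bf (u+v) = Bf w + (fac w 1).count 1 := by
        have := Bf_add w 1; rwa [hwv] at this
      rw [winc, if_pos he0, hdrop8, fac_take (by omega),
          show u+v-1 = w by omega]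
      omega
    · have hwv : w = (u+v) + (eN - 1) := by omega
      have hAadd : Bf w = Bf (u+v) + (fac (u+v) (eN-1)).count 1 := by
        rw [hwv]; exact Bf_add (u+v) (eN-1)
      rw [winc, if_neg (by omega), hdrop9, fac_take (by omega)]
      omega
  have hw2 : winc 2 (Wl (u+v)) eN = (Cf w : ℤ) - Cf (u+v) := by
    rcases Nat.eq_zero_or_pos eN with he0 | hepos
    · have hwv : w + 1 = u + v := by omega
      have hAadd : Cf (u+v) = Cf w + (fac w 1).count 2 := by
        have := Cf_add w 1; rwa [hwv] at this
      rw [winc, if_pos he0, hdrop8, fac_take (by omega),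
          show u+v-1 = w by omega]
      omega
    · have hwv : w = (u+v) + (eN - 1) := by omega
      have hAadd : Cf w = Cf (u+v) + (fac (u+v) (eN-1)).count 2 := by
        rw [hwv]; exact Cf_add (u+v) (eN-1)
      rw [winc, if_neg (by omega), hdrop9, fac_take (by omega)]
      omega
  -- the constraint equation
  have e1 : 2 * ((eN:ℤ) - 1) + dq - winc 2 (Wl (u+v)) eN = dx + dy + GcZ u v := by
    rw [hw2, hGcdef]
    omega
  -- the letter condition
  have hwat : wat (Wl (u+v)) eN = TR w := by
    rw [wat, Wl, fac_getD (by omega : 8 + eN < 20)]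
    congr 1
    omega
  have e2 : dq = 1 → wat (Wl (u+v)) eN ≤ 1 := by
    intro h1
    rw [hwat]
    exact σm_len_two (TR_le_two w) (by omega)
  -- apply the closure property
  have hstep := RC_step (stV u v) hmem dx (List.mem_range.mpr (by omega))
      dy (List.mem_range.mpr (by omega)) dq (List.mem_range.mpr (by omega))
      eN (List.mem_range.mpr heN5) e1 e2
  -- identify the components
  have c1 : GaZ x y = (eN:ℤ) - 1 + dq - dx - dy := by
    have h0 : GaZ x y = (Af (x+y) : ℤ) - Af x - Af y := rfl
    rw [h0, hAq, hAx, hAy]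
    omega
  have c2 : GbZ x y = GaZ u v + winc 0 (Wl (u+v)) eN := by
    have h0 : GbZ x y = (Bf (x+y) : ℤ) - Bf x - Bf y := rfl
    rw [h0, hBq, hBx, hBy, hGadef, hw0]
    omega
  have c3 : GcZ x y = GbZ u v + winc 1 (Wl (u+v)) eN := by
    have h0 : GcZ x y = (Cf (x+y) : ℤ) - Cf x - Cf y := rfl
    rw [h0, hCq, hCx, hCy, hGbdef, hw1]
    omega
  have hw6 : 6 ≤ w := by omega
  have hgap6 : Sfun (w-6) + 9 ≤ Sfun w := by
    have := Sfun_gap6 (w-6)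
    rwa [show w-6+6 = w by omega] at this
  have hgap8 : Sfun w + 12 ≤ Sfun (w+8) := Sfun_gap8 w
  have hmono68 : Sfun (w-6) ≤ Sfun (w+8) := by omega
  have c4 : Wl (x+y) = pw (Wl (u+v)) eN dq := by
    have hs14 : ((Wl (u+v)).drop (eN+2)).take 14 = fac (w-6) 14 := by
      rw [Wl, fac_drop (by omega), fac_take (by omega)]
      congr 1
      omega
    have hs6 : ((Wl (u+v)).drop (eN+2)).take 6 = fac (w-6) 6 := by
      rw [Wl, fac_drop (by omega), fac_take (by omega)]
      congr 1
      omega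
    have hlen6 : (σw (fac (w-6) 6)).length = Sfun w - Sfun (w-6) := by
      have := σw_fac_len (w-6) 6
      rwa [show w-6+6 = w by omega] at this
    have hσ14 : σw (fac (w-6) 14) = fac (Sfun (w-6)) (Sfun (w+8) - Sfun (w-6)) := by
      have := seg (w-6) 14
      rwa [show w-6+14 = w+8 by omega] at this
    rw [pw, hs14, hs6, hlen6, hσ14,
        fac_drop (by omega), fac_take (by omega), Wl]
    congr 1
    omega
  have hfinal : stV x y = ((eN:ℤ) - 1 + dq - dx - dy,
      (stV u v).1 + winc 0 (stV u v).2.2.2 eN,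
      (stV u v).2.1 + winc 1 (stV u v).2.2.2 eN,
      pw (stV u v).2.2.2 eN dq) := by
    have h1 : (stV u v).1 = GaZ u v := rfl
    have h2 : (stV u v).2.1 = GbZ u v := rfl
    have h3 : (stV u v).2.2.2 = Wl (u+v) := rfl
    rw [h1, h2, h3, stV, c1, c2, c3, c4]
  constructor
  · intro _
    rw [hfinal]
    exact hstep
  · have hb := (RC_bounds _ (hfinal ▸ hstep)).1
    rw [hfinal] at hb
    have : GaZ x y = (eN:ℤ) - 1 + dq - dx - dy := c1
    omega


/-! ### the main induction -/

lemma main_pred : ∀ n x y, x + y = n → Pred x y := by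
  intro n
  induction n using Nat.strong_induction_on with
  | _ n ih =>
    intro x y hxy
    obtain ⟨u, dx, hdx, hx⟩ := decomp x
    obtain ⟨v, dy, hdy, hy⟩ := decomp y
    rcases Nat.lt_or_ge (u + v) 9 with hsmall | hbig
    · -- base: x + y ≤ 18
      have hdx1 : dx ≤ 1 := by have := σm_length_le (TR u); omega
      have hdy1 : dy ≤ 1 := by have := σm_length_le (TR v); omega
      have hxb : x ≤ 2*u + 1 := by
        have := Sfun_Cf u; have := Cf_le u; omega
      have hyb : y ≤ 2*v + 1 := by
        have := Sfun_Cf v; have := Cf_le v; omega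
      have hsum : x + y ≤ 18 := by omega
      have h := base_case (x+y) (by simp; omega) x (by simp)
      rw [show x + y - x = y by omega] at h
      exact h
    · -- step
      obtain ⟨w, dq, hdq, hq⟩ := decomp (x+y)
      have hub : Sfun u + Cf u = 2*u := Sfun_Cf u
      have hvb : Sfun v + Cf v = 2*v := Sfun_Cf v
      have hCu := Cf_le u
      have hCv := Cf_le v
      -- u + v < n
      have huv1 : 1 ≤ u ∨ 1 ≤ v := by omega
      have hSu : u ≤ Sfun u := Sfun_ge u
      have hSv : v ≤ Sfun v := Sfun_ge v
      have hlt : u + v < n := by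
        rcases huv1 with h1 | h1
        · have := Af_pos h1
          have := Sfun_eq u
          omega
        · have := Af_pos h1
          have := Sfun_eq v
          omega
      have hmem := ((ih (u+v) hlt u v rfl).1 hbig)
      exact step_case hdx hx hdy hy hdq hq hbig hmem

theorem TR_one_balanced_zero' (n : ℕ) (i : ℕ) :
    |(occ 0 i n : ℤ) - (occ 0 0 n : ℤ)| ≤ 1 := by
  have h := (main_pred (i+n) i n rfl).2
  have h2 : Af (i+n) = Af i + occ 0 i n := by
    rw [occ_eq_count]; exact Af_add i n
  have h3 : occ 0 0 n = Af n := by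
    rw [occ_eq_count]; rfl
  have h4 : GaZ i n = (occ 0 i n : ℤ) - (occ 0 0 n : ℤ) := by
    rw [GaZ, h3, h2]
    push_cast
    ring
  rw [← h4, abs_le]
  omega


end TriBal

/-- The Tribonacci word is 1-balanced with respect to the letter 0. -/
theorem TR_one_balanced_zero (n : ℕ) (hn : 1 ≤ n) (i : ℕ) :
    |(occ 0 i n : ℤ) - (occ 0 0 n : ℤ)| ≤ 1 :=
  TriBal.TR_one_balanced_zero' n i
end
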